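/- arXiv:1407.1691 — 7 statements merged into one kernel-verified Lean document; each statement's English description precedes it below -/
import Mathlib

section
/- Let Γ be a folded inverse X-digraph in which every cycle has length at least m. If a reduced nontrivial word w can be traced in Γ starting at the root and the flow π_w defined by w on Γ is identically zero, then |w| ≥ 3m. -/
open scoped Classical

/-- A rooted `X`-digraph: vertices of type `V`, edges labeled by `X` (these are the
positive edges; the letter `(x, false)` denotes traversal of a positive edge backwards,
i.e. along the inverse edge). -/
structure LGraph (X V : Type*) where
  root : V
  edge : V → X → V → Prop

/-- Folded (deterministic on positive labels): at most one `x`-edge out of each vertex. -/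
def LGraph.Folded {X V : Type*} (G : LGraph X V) : Prop :=
  ∀ v x w w', G.edge v x w → G.edge v x w' → w = w'

/-- Deterministic on inverse labels: at most one `x`-edge into each vertex.  Together with
`Folded` this says the inverse `X`-digraph is folded. -/
def LGraph.CoFolded {X V : Type*} (G : LGraph X V) : Prop :=
  ∀ v v' x w, G.edge v x w → G.edge v' x w → v = v'

/-- A word is reduced if it has no cancelling adjacent pair `x x⁻¹`. -/
def Reduced {X : Type*} (w : List (X × Bool)) : Prop :=
  w.Chain' fun a b => ¬(a.1 = b.1 ∧ a.2 ≠ b.2)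

/-- `IsTrail G vs w` : the list of vertices `vs` is the trace of the word `w`
(a list of signed letters) in `G`, consecutive vertices being joined by the
appropriately directed labeled edge. -/
def LGraph.IsTrail {X V : Type*} (G : LGraph X V) : List V → List (X × Bool) → Prop
  | [_], [] => True
  | v :: v' :: vs, (x, b) :: c =>
      (cond b (G.edge v x v') (G.edge v' x v)) ∧ LGraph.IsTrail G (v' :: vs) c
  | _, _ => False

/-- The flow of a word `w` traced along the vertex list `vs`: for each positive edge
`(a, x, b)` it counts the number of forward traversals minus backward traversals. -/
noncomputable def flowOf {X V : Type*} : List V → List (X × Bool) → V → X → V → ℤ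
  | v :: v' :: vs, (x, b) :: c => fun a y bb =>
      (if b = true ∧ a = v ∧ y = x ∧ bb = v' then 1 else 0) +
      (if b = false ∧ a = v' ∧ y = x ∧ bb = v then -1 else 0) +
      flowOf (v' :: vs) c a y bb
  | _, _ => fun _ _ _ => 0

namespace StmtAux

variable {X V : Type*}

/-- The positive edge underlying the `i`-th traversal. -/
noncomputable def pe (vf : ℕ → V) (wf : ℕ → X × Bool) (i : ℕ) : V × X × V :=
  if (wf i).2 then (vf i, (wf i).1, vf (i+1)) else (vf (i+1), (wf i).1, vf i)

/-- The sign of the `i`-th traversal. -/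
noncomputable def sg {X : Type*} (wf : ℕ → X × Bool) (i : ℕ) : ℤ := if (wf i).2 then 1 else -1

lemma getD_drop_take {α : Type*} (l : List α) (s k i : ℕ) (d : α) (h : i < k) :
    ((l.drop s).take k).getD i d = l.getD (s + i) d := by
  rw [List.getD_eq_getElem?_getD, List.getD_eq_getElem?_getD, List.getElem?_take_of_lt h,
    List.getElem?_drop]

lemma pairV (vf : ℕ → V) (wf : ℕ → X × Bool) {i j : ℕ}
    (hpe : pe vf wf i = pe vf wf j) (hb : (wf i).2 ≠ (wf j).2) :
    vf i = vf (j+1) ∧ vf (i+1) = vf j ∧ (wf i).1 = (wf j).1 := by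
  unfold pe at hpe
  cases hbi : (wf i).2 <;> cases hbj : (wf j).2 <;> rw [hbi, hbj] at hpe hb
  · exact absurd rfl hb
  · simp only [Bool.false_eq_true, if_false, if_true, Prod.mk.injEq] at hpe
    exact ⟨hpe.2.2, hpe.1, hpe.2.1⟩
  · simp only [Bool.false_eq_true, if_false, if_true, Prod.mk.injEq] at hpe
    exact ⟨hpe.1, hpe.2.2, hpe.2.1⟩
  · exact absurd rfl hb

lemma sg_one_or (wf : ℕ → X × Bool) (i : ℕ) : sg wf i = 1 ∨ sg wf i = -1 := by
  unfold sg; split <;> simp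

lemma sg_add_eq_zero (wf : ℕ → X × Bool) {i j : ℕ} (hb : (wf i).2 ≠ (wf j).2) :
    sg wf i + sg wf j = 0 := by
  unfold sg
  cases hbi : (wf i).2 <;> cases hbj : (wf j).2 <;> rw [hbi, hbj] at hb <;> simp at hb ⊢

lemma partner {n : ℕ} {vf : ℕ → V} {wf : ℕ → X × Bool}
    (H1 : ∀ t : V × X × V, ∑ i ∈ Finset.range n,
      (if pe vf wf i = t then sg wf i else 0) = 0)
    {i : ℕ} (hi : i < n) :
    ∃ j, j < n ∧ j ≠ i ∧ pe vf wf j = pe vf wf i ∧ (wf j).2 ≠ (wf i).2 := by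
  by_contra hcon
  push_neg at hcon
  set S := (Finset.range n).filter (fun j => pe vf wf j = pe vf wf i) with hS
  have hmem : i ∈ S := by simp [hS, hi]
  have hsum : ∑ j ∈ S, sg wf j = 0 := by
    rw [hS, Finset.sum_filter]; exact H1 (pe vf wf i)
  have hall : ∀ j ∈ S, sg wf j = sg wf i := by
    intro j hj
    rw [hS, Finset.mem_filter, Finset.mem_range] at hj
    rcases eq_or_ne j i with rfl | hne
    · rfl
    · have := hcon j hj.1 hne hj.2
      unfold sg; rw [this]
  rw [Finset.sum_congr rfl hall, Finset.sum_const, nsmul_eq_mul] at hsum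
  rcases sg_one_or wf i with h | h <;> rw [h] at hsum <;> simp at hsum <;>
    (rw [hsum] at hmem; simp at hmem)

lemma closed_of_flow {n : ℕ} {vf : ℕ → V} {wf : ℕ → X × Bool}
    (H1 : ∀ t : V × X × V, ∑ i ∈ Finset.range n,
      (if pe vf wf i = t then sg wf i else 0) = 0) :
    vf n = vf 0 := by
  set g : V × X × V → ℤ :=
    fun t => (if t.2.2 = vf 0 then 1 else 0) - (if t.1 = vf 0 then 1 else 0) with hg
  have key : ∀ i, (if vf (i+1) = vf 0 then (1:ℤ) else 0) - (if vf i = vf 0 then 1 else 0)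
      = sg wf i * g (pe vf wf i) := by
    intro i
    rw [hg]
    unfold pe sg
    rcases h : (wf i).2 <;> simp [h] <;> ring
  have tele := Finset.sum_range_sub (fun i => if vf i = vf 0 then (1:ℤ) else 0) n
  rw [Finset.sum_congr rfl (fun i _ => key i)] at tele
  have grp := Finset.sum_fiberwise_of_maps_to (g := pe vf wf) (s := Finset.range n)
      (t := (Finset.range n).image (pe vf wf))
      (fun x hx => Finset.mem_image_of_mem _ hx)
      (fun i => sg wf i * g (pe vf wf i))
  have hz2 : ∀ t ∈ (Finset.range n).image (pe vf wf),
      ∑ i ∈ (Finset.range n).filter (fun i => pe vf wf i = t),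
        sg wf i * g (pe vf wf i) = 0 := by
    intro t _
    have hcg : ∀ i ∈ (Finset.range n).filter (fun i => pe vf wf i = t),
        sg wf i * g (pe vf wf i) = sg wf i * g t := by
      intro i hi
      rw [(Finset.mem_filter.mp hi).2]
    rw [Finset.sum_congr rfl hcg, ← Finset.sum_mul]
    have : ∑ i ∈ (Finset.range n).filter (fun i => pe vf wf i = t), sg wf i = 0 := by
      rw [Finset.sum_filter]; exact H1 t
    rw [this, zero_mul]
  rw [← grp, Finset.sum_congr rfl hz2, Finset.sum_const, smul_zero] at tele
  by_cases hvn : vf n = vf 0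
  · exact hvn
  · simp [hvn] at tele

/-- The function-level combinatorial heart: either `3m ≤ n`, or the first and last
traversals use the same positive edge in opposite directions. -/
lemma core (n m : ℕ) (hm : 0 < m) (hn : 0 < n) (vf : ℕ → V) (wf : ℕ → X × Bool)
    (H1 : ∀ t : V × X × V, ∑ i ∈ Finset.range n,
      (if pe vf wf i = t then sg wf i else 0) = 0)
    (H2 : ∀ i j, i < j → j ≤ n → vf i = vf j → m ≤ j - i)
    (H3 : ∀ i, i + 1 < n → ¬((wf i).1 = (wf (i+1)).1 ∧ (wf i).2 ≠ (wf (i+1)).2))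
    (H5 : ¬(pe vf wf (n-1) = pe vf wf 0 ∧ (wf (n-1)).2 ≠ (wf 0).2) →
      ∀ a c, a < c → c < n → vf a = vf c → m ≤ (n - c) + a) :
    3 * m ≤ n ∨ (2 ≤ n ∧ pe vf wf (n-1) = pe vf wf 0 ∧ (wf (n-1)).2 ≠ (wf 0).2) := by
  by_cases hP : pe vf wf (n-1) = pe vf wf 0 ∧ (wf (n-1)).2 ≠ (wf 0).2
  · right
    refine ⟨?_, hP⟩
    by_contra hcon
    have h10 : n - 1 = 0 := by omega
    rw [h10] at hP
    exact hP.2 rfl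
  · left
    have wrap := H5 hP
    have closed : vf n = vf 0 := closed_of_flow H1
    have psep : ∀ i j, i < j → j < n → pe vf wf i = pe vf wf j → (wf i).2 ≠ (wf j).2 →
        i + 2 ≤ j := by
      intro i j hij hjn hpe hb
      by_contra hcon
      have hj : j = i + 1 := by omega
      subst hj
      exact H3 i hjn ⟨(pairV vf wf hpe hb).2.2, hb⟩
    by_contra h3
    have T : ∀ a b c, a < b → b < c → c < n → vf a = vf b → vf b = vf c → False := by
      intro a b c hab hbc hcn e1 e2
      have g1 := H2 a b hab (by omega) e1
      have g2 := H2 b c hbc (by omega) e2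
      have g3 := wrap a c (by omega) hcn (e1.trans e2)
      omega
    have T3 : ∀ x y z, x < y → y < n → z < n → z ≠ x → z ≠ y → vf x = vf y → vf x = vf z →
        False := by
      intro x y z hxy hyn hzn hzx hzy e1 e2
      rcases lt_trichotomy z x with h | h | h
      · exact T z x y h hxy hyn e2.symm e1
      · exact hzx h
      · rcases lt_trichotomy z y with h2 | h2 | h2
        · exact T x z y h h2 hyn e2 (e2.symm.trans e1)
        · exact hzy h2
        · exact T x y z hxy h2 hzn e1 (e1.symm.trans e2)
    obtain ⟨q, hqn, hq0, hqpe, hqb⟩ := partner H1 hn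
    have hqpos : 0 < q := Nat.pos_of_ne_zero hq0
    have Pstep : ∀ k, (k < q - k ∧ q - k < n ∧ pe vf wf k = pe vf wf (q - k) ∧
        (wf k).2 ≠ (wf (q - k)).2) →
        (k+1 < q - (k+1) ∧ q - (k+1) < n ∧ pe vf wf (k+1) = pe vf wf (q - (k+1)) ∧
        (wf (k+1)).2 ≠ (wf (q - (k+1))).2) := by
      rintro k ⟨hk1, hk2, hk3, hk4⟩
      have hsep := psep k (q - k) hk1 hk2 hk3 hk4
      have hveq := (pairV vf wf hk3 hk4).2.1
      obtain ⟨j, hjn, hjne, hjpe, hjb⟩ := partner H1 (show k+1 < n by omega)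
      rcases lt_or_gt_of_ne hjne with hlt | hgt
      · have h2 := pairV vf wf hjpe hjb
        have hsep2 := psep j (k+1) hlt (by omega) hjpe hjb
        exact (T3 (k+1) (q-k) (j+1) (by omega) hk2 (by omega) (by omega) (by omega)
          hveq h2.2.1.symm).elim
      · have h2 := pairV vf wf hjpe.symm hjb.symm
        have hsep2 := psep (k+1) j hgt hjn hjpe.symm hjb.symm
        by_cases hje : j + 1 = q - k
        · refine ⟨by omega, by omega, ?_, ?_⟩
          · rw [show q - (k+1) = j from by omega]; exact hjpe.symm
          · rw [show q - (k+1) = j from by omega]; exact hjb.symm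
        · by_cases hjn2 : j + 1 = n
          · have h0 : vf 0 = vf (k+1) := by
              rw [← closed, ← hjn2]; exact h2.1.symm
            exact (T 0 (k+1) (q-k) (by omega) (by omega) hk2 h0 hveq).elim
          · exact (T3 (k+1) (q-k) (j+1) (by omega) hk2 (by omega) (by omega) hje
              hveq h2.1).elim
    have Pall : ∀ k, k < q - k ∧ q - k < n ∧ pe vf wf k = pe vf wf (q - k) ∧
        (wf k).2 ≠ (wf (q - k)).2 := by
      intro k
      induction k with
      | zero =>
          refine ⟨by omega, by omega, ?_, ?_⟩
          · rw [Nat.sub_zero]; exact hqpe.symm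
          · rw [Nat.sub_zero]; exact hqb.symm
      | succ k ih => exact Pstep k ih
    have := (Pall q).1
    omega

variable {G : LGraph X V}

lemma trail_length : ∀ {vs : List V} {w : List (X × Bool)}, G.IsTrail vs w → vs.length = w.length + 1
  | [], [], h => h.elim
  | [], (_, _) :: _, h => h.elim
  | [_], [], _ => rfl
  | [_], (_, _) :: _, h => h.elim
  | _ :: _ :: _, [], h => h.elim
  | _ :: v' :: t, (_, _) :: c, h => by
      have := trail_length (vs := v' :: t) (w := c) h.2
      simpa using this

lemma trail_step (r : V) (d : X × Bool) :
    ∀ {vs : List V} {w : List (X × Bool)}, G.IsTrail vs w → ∀ i, i < w.length →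
      cond (w.getD i d).2 (G.edge (vs.getD i r) (w.getD i d).1 (vs.getD (i+1) r))
        (G.edge (vs.getD (i+1) r) (w.getD i d).1 (vs.getD i r))
  | [], [], h, _, _ => h.elim
  | [], (_, _) :: _, h, _, _ => h.elim
  | [_], [], _, _, hi => by simp at hi
  | [_], (_, _) :: _, h, _, _ => h.elim
  | _ :: _ :: _, [], h, _, _ => h.elim
  | v :: v' :: t, (x, b) :: c, h, 0, _ => by simpa using h.1
  | v :: v' :: t, (x, b) :: c, h, (i+1), hi => by
      simpa [List.getD_cons_succ] using
        trail_step r d (vs := v' :: t) (w := c) h.2 i (by simpa using hi)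

lemma trail_drop : ∀ (k : ℕ) {vs : List V} {w : List (X × Bool)}, G.IsTrail vs w →
    k ≤ w.length → G.IsTrail (vs.drop k) (w.drop k)
  | 0, _, _, h, _ => h
  | (k+1), [], [], h, _ => h.elim
  | (k+1), [], (_, _) :: _, h, _ => h.elim
  | (k+1), [_], [], _, hk => by simp at hk
  | (k+1), [_], (_, _) :: _, h, _ => h.elim
  | (k+1), _ :: _ :: _, [], h, _ => h.elim
  | (k+1), v :: v' :: t, (x, b) :: c, h, hk =>
      trail_drop k (vs := v' :: t) (w := c) h.2 (by simpa using hk)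

lemma trail_take : ∀ (k : ℕ) {vs : List V} {w : List (X × Bool)}, G.IsTrail vs w →
    G.IsTrail (vs.take (k+1)) (w.take k)
  | 0, [], [], h => h.elim
  | 0, [], (_, _) :: _, h => h.elim
  | 0, _ :: _, [], _ => trivial
  | 0, [_], (_, _) :: _, h => h.elim
  | 0, _ :: _ :: _, (_, _) :: _, _ => trivial
  | (k+1), [], [], h => h.elim
  | (k+1), [], (_, _) :: _, h => h.elim
  | (k+1), [_], [], _ => trivial
  | (k+1), [_], (_, _) :: _, h => h.elim
  | (k+1), _ :: _ :: _, [], h => h.elim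
  | (k+1), v :: v' :: t, (x, b) :: c, h =>
      ⟨h.1, trail_take k (vs := v' :: t) (w := c) h.2⟩

lemma trail_append : ∀ {vs1 vs2 : List V} {w1 w2 : List (X × Bool)},
    G.IsTrail vs1 w1 → G.IsTrail vs2 w2 → vs1.getLast? = vs2.head? →
    G.IsTrail (vs1 ++ vs2.tail) (w1 ++ w2)
  | [], _, [], _, h1, _, _ => h1.elim
  | [], _, (_, _) :: _, _, h1, _, _ => h1.elim
  | [_], _, (_, _) :: _, _, h1, _, _ => h1.elim
  | _ :: _ :: _, _, [], _, h1, _, _ => h1.elim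
  | [v], vs2, [], w2, _, h2, hj => by
      rcases vs2 with _ | ⟨v2, t2⟩
      · exact absurd (trail_length h2) (by simp)
      · simp at hj
        subst hj
        simpa using h2
  | v :: v' :: t, vs2, (x, b) :: c, w2, h1, h2, hj =>
      ⟨h1.1, trail_append (vs1 := v' :: t) h1.2 h2 (by simpa using hj)⟩

lemma flow_sum (r : V) (d : X × Bool) :
    ∀ (w : List (X × Bool)) (vs : List V), vs.length = w.length + 1 → ∀ a y bb,
      flowOf vs w a y bb = ∑ i ∈ Finset.range w.length,
        (if pe (fun i => vs.getD i r) (fun i => w.getD i d) i = (a, y, bb)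
         then sg (fun i => w.getD i d) i else 0) := by
  intro w
  induction w with
  | nil =>
      intro vs hlen a y bb
      rcases vs with _ | ⟨v, vs⟩
      · simp at hlen
      rcases vs with _ | ⟨v', t⟩
      · simp [flowOf]
      · simp at hlen
  | cons l c ih =>
      rcases l with ⟨x, b⟩
      intro vs hlen a y bb
      rcases vs with _ | ⟨v, vs⟩
      · simp at hlen
      rcases vs with _ | ⟨v', t⟩
      · simp at hlen
      have hrec : flowOf (v :: v' :: t) ((x, b) :: c) a y bb =
          (if b = true ∧ a = v ∧ y = x ∧ bb = v' then 1 else 0) +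
          (if b = false ∧ a = v' ∧ y = x ∧ bb = v then -1 else 0) +
          flowOf (v' :: t) c a y bb := rfl
      rw [hrec, ih (v' :: t) (by simpa using hlen) a y bb]
      rw [List.length_cons, Finset.sum_range_succ']
      have hsh : ∀ i, (if pe (fun i => (v :: v' :: t).getD i r)
            (fun i => (((x, b) :: c)).getD i d) (i+1) = (a, y, bb)
           then sg (fun i => (((x, b) :: c)).getD i d) (i+1) else 0)
          = (if pe (fun i => (v' :: t).getD i r) (fun i => c.getD i d) i = (a, y, bb)
             then sg (fun i => c.getD i d) i else 0) := by
        intro i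
        simp [pe, sg, List.getD_cons_succ]
      rw [Finset.sum_congr rfl (fun i _ => hsh i)]
      have hf0 : (if pe (fun i => (v :: v' :: t).getD i r)
            (fun i => (((x, b) :: c)).getD i d) 0 = (a, y, bb)
           then sg (fun i => (((x, b) :: c)).getD i d) 0 else 0)
          = (if b = true ∧ a = v ∧ y = x ∧ bb = v' then 1 else 0) +
            (if b = false ∧ a = v' ∧ y = x ∧ bb = v then -1 else 0) := by
        cases b
        · simp only [pe, sg, List.getD_cons_zero, List.getD_cons_succ]
          simp [Prod.ext_iff, eq_comm, and_comm, and_left_comm]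
        · simp only [pe, sg, List.getD_cons_zero, List.getD_cons_succ]
          simp [Prod.ext_iff, eq_comm, and_comm, and_left_comm]
      rw [hf0]
      ring

lemma master (G : LGraph X V) (hf : G.Folded) (hc : G.CoFolded) (m : ℕ)
    (hcyc : ∀ (v : V) (vs : List V) (c : List (X × Bool)), c ≠ [] → Reduced c →
      G.IsTrail vs c → vs.head? = some v → vs.getLast? = some v → m ≤ c.length) :
    ∀ (n : ℕ) (w : List (X × Bool)) (vs : List V), w.length = n → w ≠ [] → Reduced w →
      G.IsTrail vs w → flowOf vs w = (fun _ _ _ => 0) → 3 * m ≤ n := by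
  intro n
  induction n using Nat.strong_induction_on with
  | _ n IH =>
  intro w vs hlen hne hred htr hz
  rcases Nat.eq_zero_or_pos m with hm | hm
  · simp [hm]
  have hn : 0 < n := by
    rw [← hlen]
    exact List.length_pos_iff.mpr hne
  have hlenv : vs.length = n + 1 := by rw [trail_length htr, hlen]
  have hvsome : ∀ i, i ≤ n → vs[i]? = some (vs.getD i G.root) := by
    intro i hi
    have h1 : i < vs.length := by omega
    rw [List.getElem?_eq_getElem h1, List.getD_eq_getElem _ _ h1]
  have hwsome : ∀ i, i < n → w[i]? = some (w.getD i (w.head hne)) := by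
    intro i hi
    have h1 : i < w.length := by omega
    rw [List.getElem?_eq_getElem h1, List.getD_eq_getElem _ _ h1]
  have H1 : ∀ t : V × X × V, ∑ i ∈ Finset.range n,
      (if pe (fun i => vs.getD i G.root) (fun i => w.getD i (w.head hne)) i = t
       then sg (fun i => w.getD i (w.head hne)) i else 0) = 0 := by
    rintro ⟨a, y, bb⟩
    have h0 : flowOf vs w a y bb = 0 := by rw [hz]
    rw [flow_sum G.root (w.head hne) w vs (by omega), hlen] at h0
    exact h0
  have H2 : ∀ i j, i < j → j ≤ n → vs.getD i G.root = vs.getD j G.root → m ≤ j - i := by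
    intro i j hij hjn hv
    have htr2 : G.IsTrail ((vs.drop i).take (j - i + 1)) ((w.drop i).take (j - i)) :=
      trail_take (j - i) (trail_drop i htr (by omega))
    have hlc : ((w.drop i).take (j - i)).length = j - i := by
      simp [hlen]; omega
    have hne2 : ((w.drop i).take (j - i)) ≠ [] := by
      refine List.length_pos_iff.mp ?_
      rw [hlc]; omega
    have hred2 : Reduced ((w.drop i).take (j - i)) := (hred.drop i).take _
    have hhd : ((vs.drop i).take (j - i + 1)).head? = some (vs.getD i G.root) := by
      rw [List.head?_eq_getElem?, List.getElem?_take_of_lt (by omega), List.getElem?_drop,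
        Nat.add_zero]
      exact hvsome i (by omega)
    have hlast : ((vs.drop i).take (j - i + 1)).getLast? = some (vs.getD i G.root) := by
      rw [List.getLast?_eq_getElem?]
      have hL : ((vs.drop i).take (j - i + 1)).length = j - i + 1 := by
        simp [hlenv]; omega
      rw [hL, Nat.add_sub_cancel, List.getElem?_take_of_lt (by omega), List.getElem?_drop,
        show i + (j - i) = j from by omega, hvsome j (by omega), hv]
    have := hcyc (vs.getD i G.root) _ _ hne2 hred2 htr2 hhd hlast
    rw [hlc] at this; exact this
  have H3 : ∀ i, i + 1 < n → ¬((w.getD i (w.head hne)).1 = (w.getD (i+1) (w.head hne)).1 ∧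
      (w.getD i (w.head hne)).2 ≠ (w.getD (i+1) (w.head hne)).2) := by
    intro i hi
    have hchain := List.isChain_iff_getElem.mp hred i (by rw [hlen]; omega)
    have e1 : w.getD i (w.head hne) = w.get ⟨i, by omega⟩ :=
      List.getD_eq_get _ _ ⟨i, by omega⟩
    have e2 : w.getD (i+1) (w.head hne) = w.get ⟨i+1, by omega⟩ :=
      List.getD_eq_get _ _ ⟨i+1, by omega⟩
    rw [e1, e2]
    exact hchain
  have closed' : vs.getD n G.root = vs.getD 0 G.root := closed_of_flow H1
  have H5 : ¬(pe (fun i => vs.getD i G.root) (fun i => w.getD i (w.head hne)) (n-1) =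
        pe (fun i => vs.getD i G.root) (fun i => w.getD i (w.head hne)) 0 ∧
        (w.getD (n-1) (w.head hne)).2 ≠ (w.getD 0 (w.head hne)).2) →
      ∀ a c, a < c → c < n → vs.getD a G.root = vs.getD c G.root → m ≤ (n - c) + a := by
    intro hP a c hac hcn hveq
    have seam : ¬((w.getD (n-1) (w.head hne)).1 = (w.getD 0 (w.head hne)).1 ∧
        (w.getD (n-1) (w.head hne)).2 ≠ (w.getD 0 (w.head hne)).2) := by
      rintro ⟨hx, hb⟩
      apply hP
      refine ⟨?_, hb⟩
      have hn2 : 2 ≤ n := by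
        by_contra hcon
        have h10 : n - 1 = 0 := by omega
        rw [h10] at hb
        exact hb rfl
      have e0 := trail_step G.root (w.head hne) htr 0 (by omega)
      have e1 := trail_step G.root (w.head hne) htr (n-1) (by omega)
      have hsucc : n - 1 + 1 = n := by omega
      rw [hsucc] at e1
      cases hb0 : (w.getD 0 (w.head hne)).2
      · have hb1 : (w.getD (n-1) (w.head hne)).2 = true := by
          cases hb1 : (w.getD (n-1) (w.head hne)).2
          · rw [hb0, hb1] at hb; exact absurd rfl hb
          · rfl
        rw [hb0] at e0; rw [hb1] at e1
        simp only [cond_true, cond_false] at e0 e1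
        rw [closed', hx] at e1
        have hvv := hc _ _ _ _ e1 e0
        unfold pe
        rw [hb0, hb1, hsucc]
        simp only [if_true, Bool.false_eq_true, if_false]
        rw [closed', hx, hvv]
      · have hb1 : (w.getD (n-1) (w.head hne)).2 = false := by
          cases hb1 : (w.getD (n-1) (w.head hne)).2
          · rfl
          · rw [hb0, hb1] at hb; exact absurd rfl hb
        rw [hb0] at e0; rw [hb1] at e1
        simp only [cond_true, cond_false] at e0 e1
        rw [closed', hx] at e1
        have hvv := hf _ _ _ _ e1 e0
        unfold pe
        rw [hb0, hb1, hsucc]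
        simp only [if_true, Bool.false_eq_true, if_false]
        rw [closed', hx, hvv]
    have hdt : G.IsTrail (vs.drop c) (w.drop c) := trail_drop c htr (by omega)
    have htt : G.IsTrail (vs.take (a+1)) (w.take a) := trail_take a htr
    have hvdne : vs.drop c ≠ [] := by
      refine List.length_pos_iff.mp ?_
      simp [hlenv]; omega
    have hjoin : (vs.drop c).getLast? = (vs.take (a+1)).head? := by
      rw [List.getLast?_eq_getElem?]
      have hL : (vs.drop c).length = n + 1 - c := by simp [hlenv]
      rw [hL, List.getElem?_drop, show c + (n + 1 - c - 1) = n from by omega,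
        hvsome n (le_refl n), List.head?_eq_getElem?,
        List.getElem?_take_of_lt (by omega), hvsome 0 (by omega), closed']
    have hW := trail_append hdt htt hjoin
    have hlW : (w.drop c ++ w.take a).length = (n - c) + a := by
      simp [hlen]; omega
    have hredW : Reduced (w.drop c ++ w.take a) := by
      apply List.isChain_append.mpr
      refine ⟨hred.drop c, hred.take a, ?_⟩
      intro p hp s hs
      rcases Nat.eq_zero_or_pos a with ha0 | ha0
      · rw [ha0] at hs; simp at hs
      · have hp' : p = w.getD (n-1) (w.head hne) := by
          rw [List.getLast?_eq_getElem?] at hp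
          have hL : (w.drop c).length = n - c := by simp [hlen]
          rw [hL, List.getElem?_drop, show c + (n - c - 1) = n - 1 from by omega,
            hwsome (n-1) (by omega)] at hp
          exact (by simpa using hp : _ = p).symm
        have hs' : s = w.getD 0 (w.head hne) := by
          rw [List.head?_eq_getElem?, List.getElem?_take_of_lt (by omega),
            hwsome 0 (by omega)] at hs
          exact (by simpa using hs : _ = s).symm
        rw [hp', hs']; exact seam
    have hWne : (w.drop c ++ w.take a) ≠ [] := by
      refine List.length_pos_iff.mp ?_
      rw [hlW]; omega
    have hhdW : (vs.drop c ++ (vs.take (a+1)).tail).head? = some (vs.getD c G.root) := by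
      rw [List.head?_append_of_ne_nil _ hvdne, List.head?_drop]
      exact hvsome c (by omega)
    have hlastW : (vs.drop c ++ (vs.take (a+1)).tail).getLast? = some (vs.getD c G.root) := by
      rcases Nat.eq_zero_or_pos a with ha0 | ha0
      · subst ha0
        have htail : (vs.take (0+1)).tail = [] := by
          rcases vs with _ | ⟨v0, t0⟩
          · simp at hlenv
          · simp
        rw [htail, List.append_nil, List.getLast?_eq_getElem?]
        have hL : (vs.drop c).length = n + 1 - c := by simp [hlenv]
        rw [hL, List.getElem?_drop, show c + (n + 1 - c - 1) = n from by omega,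
          hvsome n (le_refl n), closed', hveq]
      · have htne : (vs.take (a+1)).tail ≠ [] := by
          refine List.length_pos_iff.mp ?_
          simp [hlenv]; omega
        rw [List.getLast?_append_of_ne_nil _ htne, List.getLast?_eq_getElem?]
        have hL : ((vs.take (a+1)).tail).length = a := by
          simp [hlenv]; omega
        rw [hL, List.getElem?_tail, show a - 1 + 1 = a from by omega,
          List.getElem?_take_of_lt (by omega), hvsome a (by omega), hveq]
    have := hcyc (vs.getD c G.root) _ _ hWne hredW hW hhdW hlastW
    rw [hlW] at this
    exact this
  rcases core n m hm hn _ _ H1 H2 H3 H5 with hdone | ⟨hn2, hpe01, hb01⟩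
  · exact hdone
  · -- first and last letters cancel: strip them and recurse
    have hlab := (pairV _ _ hpe01 hb01).2.2
    have hn3 : 3 ≤ n := by
      by_contra hcon
      have h11 : n - 1 = 1 := by omega
      rw [h11] at hlab hb01
      exact H3 0 (by omega) ⟨hlab.symm, hb01.symm⟩
    have hlw' : ((w.drop 1).take (n-2)).length = n - 2 := by
      simp only [List.length_take, List.length_drop, hlen]; omega
    have hlvs' : ((vs.drop 1).take (n-1)).length = n - 1 := by
      simp only [List.length_take, List.length_drop, hlenv]; omega
    have htr' : G.IsTrail ((vs.drop 1).take (n-1)) ((w.drop 1).take (n-2)) := by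
      have h := trail_take (n-2) (trail_drop 1 htr (by omega))
      rwa [show n - 2 + 1 = n - 1 from by omega] at h
    have hred' : Reduced ((w.drop 1).take (n-2)) := (hred.drop 1).take _
    have hne' : (w.drop 1).take (n-2) ≠ [] := by
      refine List.length_pos_iff.mp ?_
      rw [hlw']; omega
    have hz' : flowOf ((vs.drop 1).take (n-1)) ((w.drop 1).take (n-2)) =
        (fun _ _ _ => 0) := by
      funext a y bb
      rw [flow_sum G.root (w.head hne) _ _ (by rw [hlw', hlvs']; omega), hlw']
      have hsh : ∀ i ∈ Finset.range (n-2),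
          (if pe (fun i => ((vs.drop 1).take (n-1)).getD i G.root)
              (fun i => ((w.drop 1).take (n-2)).getD i (w.head hne)) i = (a, y, bb)
           then sg (fun i => ((w.drop 1).take (n-2)).getD i (w.head hne)) i else 0)
          = (if pe (fun i => vs.getD i G.root) (fun i => w.getD i (w.head hne)) (i+1) = (a, y, bb)
             then sg (fun i => w.getD i (w.head hne)) (i+1) else 0) := by
        intro i hi
        rw [Finset.mem_range] at hi
        have e1 : ((vs.drop 1).take (n-1)).getD i G.root = vs.getD (i+1) G.root := by
          rw [getD_drop_take vs 1 (n-1) i G.root (by omega), Nat.add_comm]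
        have e2 : ((vs.drop 1).take (n-1)).getD (i+1) G.root = vs.getD (i+1+1) G.root := by
          rw [getD_drop_take vs 1 (n-1) (i+1) G.root (by omega)]
          congr 1
          omega
        have e3 : ((w.drop 1).take (n-2)).getD i (w.head hne) = w.getD (i+1) (w.head hne) := by
          rw [getD_drop_take w 1 (n-2) i (w.head hne) (by omega), Nat.add_comm]
        simp only [pe, sg, e1, e2, e3]
      rw [Finset.sum_congr rfl hsh]
      have hF := H1 (a, y, bb)
      have dec1 := Finset.sum_range_succ' (fun i =>
        (if pe (fun i => vs.getD i G.root) (fun i => w.getD i (w.head hne)) i = (a, y, bb)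
         then sg (fun i => w.getD i (w.head hne)) i else 0)) (n-1)
      rw [show n - 1 + 1 = n from by omega] at dec1
      have dec2 := Finset.sum_range_succ (fun i =>
        (if pe (fun i => vs.getD i G.root) (fun i => w.getD i (w.head hne)) (i+1) = (a, y, bb)
         then sg (fun i => w.getD i (w.head hne)) (i+1) else 0)) (n-2)
      rw [show n - 2 + 1 = n - 1 from by omega] at dec2
      have h01 : (if pe (fun i => vs.getD i G.root) (fun i => w.getD i (w.head hne)) 0 = (a, y, bb)
           then sg (fun i => w.getD i (w.head hne)) 0 else 0)
          + (if pe (fun i => vs.getD i G.root) (fun i => w.getD i (w.head hne)) (n-1) = (a, y, bb)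
             then sg (fun i => w.getD i (w.head hne)) (n-1) else 0) = 0 := by
        rw [hpe01]
        by_cases hq : pe (fun i => vs.getD i G.root) (fun i => w.getD i (w.head hne)) 0 = (a, y, bb)
        · rw [if_pos hq, if_pos hq]
          have := sg_add_eq_zero (fun i => w.getD i (w.head hne)) hb01
          linarith
        · rw [if_neg hq, if_neg hq]; ring
      linarith [hF, dec1, dec2, h01]
    have hres := IH (n-2) (by omega) _ _ hlw' hne' hred' htr' hz'
    omega

end StmtAux

/-- If every (reduced nontrivial) cycle of a folded inverse `X`-digraph `Γ` has length at
least `m`, and a reduced nontrivial word `w` can be traced in `Γ` from the root with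
identically zero flow, then `|w| ≥ 3m`. -/
theorem stmt0 {X V : Type*} (G : LGraph X V) (hf : G.Folded) (hc : G.CoFolded) (m : ℕ)
    (hcyc : ∀ (v : V) (vs : List V) (c : List (X × Bool)), c ≠ [] → Reduced c →
      G.IsTrail vs c → vs.head? = some v → vs.getLast? = some v → m ≤ c.length)
    (w : List (X × Bool)) (hw : w ≠ []) (hred : Reduced w) (vs : List V)
    (htr : G.IsTrail vs w) (hroot : vs.head? = some G.root)
    (hzero : flowOf vs w = fun _ _ _ => 0) :
    3 * m ≤ w.length :=
  StmtAux.master G hf hc m hcyc w.length w vs rfl hw hred htr hzero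
end

section
/- Let F be a free group of rank r and F^{(d)} its d-th derived subgroup. If w ∈ F is a nontrivial reduced word with w ∈ F^{(d)} (i.e. w = 1 in the free solvable group S_{r,d} = F/F^{(d)}), then |w| ≥ 3^d. -/
set_option linter.unusedSectionVars false

namespace Stmt2Aux
open List FreeGroup

variable {α : Type} [DecidableEq α]

/-- Reducedness as a chain condition. -/
def RedW (L : List (α × Bool)) : Prop :=
  List.Chain' (fun p q => ¬(p.1 = q.1 ∧ p.2 = !q.2)) L

theorem reduce_eq_of_redW : ∀ {L : List (α × Bool)}, RedW L → FreeGroup.reduce L = L := by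
  intro L
  induction L with
  | nil => intro _; rfl
  | cons x M ih =>
    intro h
    rcases List.isChain_cons.mp h with ⟨hx, hM⟩
    rw [FreeGroup.reduce.cons, ih hM]
    cases M with
    | nil => rfl
    | cons y t =>
      have : ¬(x.1 = y.1 ∧ x.2 = !y.2) := hx y rfl
      simp only [this, if_false]

theorem redW_of_reduce_eq : ∀ {L : List (α × Bool)}, FreeGroup.reduce L = L → RedW L := by
  intro L
  induction L with
  | nil => intro _; exact List.isChain_nil
  | cons x M ih =>
    intro h
    rw [FreeGroup.reduce.cons] at h
    rcases hM : FreeGroup.reduce M with _ | ⟨y, t⟩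
    · rw [hM] at h
      simp only at h
      have hM0 : M = [] := by
        injection h with h1 h2
        exact h2.symm
      subst hM0; exact List.isChain_singleton x
    · rw [hM] at h
      simp only at h
      by_cases hc : x.1 = y.1 ∧ x.2 = !y.2
      · rw [if_pos hc] at h
        exfalso
        have hlen : (FreeGroup.reduce M).length ≤ M.length :=
          FreeGroup.Red.length_le (FreeGroup.reduce.red)
        rw [hM] at hlen
        have h' := congrArg List.length h
        simp only [List.length_cons] at h' hlen
        omega
      · rw [if_neg hc] at h
        have hMyt : M = y :: t := by
          injection h with h1 h2
          exact h2.symm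
        have hred : FreeGroup.reduce M = M := by rw [hM, hMyt]
        have hMred := ih hred
        subst hMyt
        exact List.isChain_cons_cons.mpr ⟨hc, hMred⟩

theorem redW_toWord (w : FreeGroup α) : RedW w.toWord :=
  redW_of_reduce_eq (FreeGroup.reduce_toWord w)

theorem toWord_mk_of_redW {L : List (α × Bool)} (h : RedW L) :
    (FreeGroup.mk L).toWord = L := by
  rw [FreeGroup.toWord_mk, reduce_eq_of_redW h]

theorem mk_nil_eq_one : (FreeGroup.mk ([] : List (α × Bool))) = 1 := by
  rw [← FreeGroup.toWord_one, FreeGroup.mk_toWord]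

set_option linter.unusedSectionVars false in
theorem mk_singleton_inv (x : α × Bool) :
    FreeGroup.mk [(x.1, !x.2)] = (FreeGroup.mk [x])⁻¹ := by
  rw [FreeGroup.inv_mk]
  simp [FreeGroup.invRev]


-- part B
section PartB
variable {G : Type} [Group G] [DecidableEq G]

variable (π : FreeGroup α →* G)

/-- image of a single letter -/
def sg (x : α × Bool) : G := if x.2 then π (FreeGroup.of x.1) else (π (FreeGroup.of x.1))⁻¹

theorem sg_inv (x : α × Bool) : sg π (x.1, !x.2) = (sg π x)⁻¹ := by
  rcases x with ⟨i, b⟩; cases b <;> simp [sg]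

theorem pi_mk_cons (x : α × Bool) (L : List (α × Bool)) :
    π (FreeGroup.mk (x :: L)) = sg π x * π (FreeGroup.mk L) := by
  have h1 : FreeGroup.mk (x :: L) = FreeGroup.mk [x] * FreeGroup.mk L := by
    rw [FreeGroup.mul_mk]; rfl
  have h2 : π (FreeGroup.mk [x]) = sg π x := by
    rcases x with ⟨i, b⟩
    cases b
    · have : FreeGroup.mk [((i : α), false)] = (FreeGroup.of i)⁻¹ := by
        have := mk_singleton_inv (α := α) (i, true)
        simpa [FreeGroup.of] using this
      rw [this]; simp [sg]
    · have : FreeGroup.mk [((i : α), true)] = FreeGroup.of i := rfl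
      rw [this]; simp [sg]
  rw [h1, π.map_mul, h2]

theorem pi_mk_concat (L : List (α × Bool)) (x : α × Bool) :
    π (FreeGroup.mk (L ++ [x])) = π (FreeGroup.mk L) * sg π x := by
  rw [← FreeGroup.mul_mk, π.map_mul]
  congr 1
  rw [show FreeGroup.mk [x] = FreeGroup.mk (x :: []) from rfl, pi_mk_cons, mk_nil_eq_one]
  simp

/-- The signed edge-flow of a word, starting at vertex `g`, in the Cayley graph of `G`.
Edges are indexed by their positive-direction tail and the letter. -/
def flow : G → List (α × Bool) → (G × α) → ℤ
  | _, [], _ => 0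
  | g, x :: L, p =>
      (if p = ((if x.2 then g else g * sg π x), x.1) then (if x.2 then (1 : ℤ) else -1) else 0)
      + flow (g * sg π x) L p

@[simp] theorem flow_nil (g : G) (p : G × α) : flow π g [] p = 0 := rfl

theorem flow_cons (g : G) (x : α × Bool) (L : List (α × Bool)) (p : G × α) :
    flow π g (x :: L) p =
      (if p = ((if x.2 then g else g * sg π x), x.1) then (if x.2 then (1 : ℤ) else -1) else 0)
      + flow π (g * sg π x) L p := rfl

theorem flow_append (A B : List (α × Bool)) : ∀ (g : G) (p : G × α),
    flow π g (A ++ B) p = flow π g A p + flow π (g * π (FreeGroup.mk A)) B p := by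
  induction A with
  | nil =>
    intro g p
    simp [mk_nil_eq_one]
  | cons x A ih =>
    intro g p
    rw [List.cons_append, flow_cons, flow_cons, ih, pi_mk_cons, add_assoc, mul_assoc]

theorem flow_cancel (g : G) (x : α × Bool) (L : List (α × Bool)) (p : G × α) :
    flow π g (x :: (x.1, !x.2) :: L) p = flow π g L p := by
  rcases x with ⟨i, b⟩
  cases b <;>
    · simp [flow_cons, sg, mul_assoc]
      split_ifs <;> ring

theorem flow_red_step {L L' : List (α × Bool)} (h : FreeGroup.Red.Step L L') :
    ∀ (g : G) (p : G × α), flow π g L p = flow π g L' p := by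
  cases h with
  | @not L₁ L₂ x b =>
    intro g p
    rw [flow_append, flow_append]
    congr 1
    exact flow_cancel π _ (x, b) L₂ p

theorem flow_red {L L' : List (α × Bool)} (h : FreeGroup.Red L L') (g : G) (p : G × α) :
    flow π g L p = flow π g L' p := by
  induction h with
  | refl => rfl
  | tail _ hstep ih => rw [ih]; exact flow_red_step π hstep g p

theorem flow_toWord_mk (L : List (α × Bool)) (g : G) (p : G × α) :
    flow π g (FreeGroup.mk L).toWord p = flow π g L p := by
  rw [FreeGroup.toWord_mk]
  exact (flow_red π (FreeGroup.reduce.red) g p).symm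

theorem flow_mul (u v : FreeGroup α) (hu : π u = 1) (g : G) (p : G × α) :
    flow π g (u * v).toWord p = flow π g u.toWord p + flow π g v.toWord p := by
  have h1 : u * v = FreeGroup.mk (u.toWord ++ v.toWord) := by
    rw [← FreeGroup.mul_mk, FreeGroup.mk_toWord, FreeGroup.mk_toWord]
  rw [h1, flow_toWord_mk, flow_append]
  congr 2
  rw [FreeGroup.mk_toWord, hu, mul_one]

end PartB
-- part C
section PartC
variable {G : Type} [Group G] [DecidableEq G]
variable (π : FreeGroup α →* G)

/-- the list of (edge, sign) events of a word read from vertex `g`. -/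
def evList : G → List (α × Bool) → List ((G × α) × Bool)
  | _, [] => []
  | g, x :: L => (((if x.2 then g else g * sg π x), x.1), x.2) :: evList (g * sg π x) L

@[simp] theorem evList_nil (g : G) : evList π g [] = [] := rfl

theorem evList_cons (g : G) (x : α × Bool) (L : List (α × Bool)) :
    evList π g (x :: L) =
      (((if x.2 then g else g * sg π x), x.1), x.2) :: evList π (g * sg π x) L := rfl

@[simp] theorem evList_length : ∀ (L : List (α × Bool)) (g : G),
    (evList π g L).length = L.length := by
  intro L
  induction L with
  | nil => intro g; rfl
  | cons x L ih => intro g; rw [evList_cons]; simp [ih]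

theorem flow_eq_count : ∀ (L : List (α × Bool)) (g : G) (p : G × α),
    flow π g L p = ((evList π g L).count (p, true) : ℤ) - ((evList π g L).count (p, false) : ℤ) := by
  intro L
  induction L with
  | nil => intro g p; simp
  | cons x L ih =>
    intro g p
    rw [flow_cons, evList_cons, List.count_cons, List.count_cons, ih]
    rcases x with ⟨i, b⟩
    simp only [beq_iff_eq]
    by_cases hp : p = ((if b then g else g * sg π (i, b)), i)
    · subst hp; cases b <;> simp <;> push_cast <;> ring
    · have h1 : ¬ ((((if b then g else g * sg π (i,b)) , i), b) = (p, true)) := by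
        cases b <;> simp_all <;> tauto
      have h2 : ¬ ((((if b then g else g * sg π (i,b)) , i), b) = (p, false)) := by
        cases b <;> simp_all <;> tauto
      rw [if_neg hp, if_neg h1, if_neg h2]
      push_cast; ring

theorem evList_get? : ∀ (L : List (α × Bool)) (g : G) (j : ℕ),
    (evList π g L)[j]? = L[j]?.map
      (fun x => (((if x.2 then g * π (FreeGroup.mk (L.take j))
           else g * π (FreeGroup.mk (L.take (j+1)))), x.1), x.2)) := by
  intro L
  induction L with
  | nil => intro g j; simp
  | cons y M ih =>
    intro g j
    cases j with
    | zero =>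
      rw [evList_cons]
      simp only [List.getElem?_cons_zero, Option.map_some]
      rcases y with ⟨i, b⟩
      cases b
      · simp only [List.take_zero, List.take_succ_cons, List.take_zero]
        rw [show FreeGroup.mk [(i, false)] = FreeGroup.mk ((i,false) :: []) from rfl, pi_mk_cons,
          mk_nil_eq_one]
        simp
      · simp [mk_nil_eq_one]
    | succ j =>
      rw [evList_cons]
      simp only [List.getElem?_cons_succ]
      rw [ih (g * sg π y) j]
      have htake : ∀ m : ℕ, g * sg π y * π (FreeGroup.mk (M.take m))
          = g * π (FreeGroup.mk ((y :: M).take (m+1))) := by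
        intro m
        rw [List.take_succ_cons, pi_mk_cons, mul_assoc]
      rw [htake j, htake (j+1)]

end PartC
-- part D
section PartD
variable {G : Type} [Group G] [DecidableEq G]

theorem flow_vanish (π : FreeGroup α →* G) (d : ℕ)
    (hker : π.ker = derivedSeries (FreeGroup α) d)
    (w : FreeGroup α) (hw : w ∈ derivedSeries (FreeGroup α) (d+1)) (p : G × α) :
    flow π 1 w.toWord p = 0 := by
  set N := derivedSeries (FreeGroup α) d with hN
  let φ : N →* Multiplicative ((G × α) → ℤ) :=
    { toFun := fun x => Multiplicative.ofAdd (fun q => flow π 1 (x : FreeGroup α).toWord q)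
      map_one' := by
        simp only [OneMemClass.coe_one, FreeGroup.toWord_one]
        rfl
      map_mul' := by
        intro x y
        have hx : π (x : FreeGroup α) = 1 := by
          rw [← MonoidHom.mem_ker, hker]; exact x.2
        simp only [Subgroup.coe_mul]
        rw [← ofAdd_add]
        congr 1
        funext q
        simp only [Pi.add_apply]
        exact flow_mul π _ _ hx 1 q }
  have hw' : w ∈ ⁅N, N⁆ := by rwa [derivedSeries_succ] at hw
  have hmap : ⁅N, N⁆ = Subgroup.map N.subtype (commutator N) := by
    rw [commutator, Subgroup.map_commutator, ← MonoidHom.range_eq_map, Subgroup.range_subtype]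
  rw [hmap] at hw'
  rcases Subgroup.mem_map.mp hw' with ⟨y, hy, hyw⟩
  have hker' : y ∈ φ.ker := Abelianization.commutator_subset_ker φ hy
  have : φ y = 1 := hker'
  have h0 : (fun q => flow π 1 (y : FreeGroup α).toWord q) = 0 := by
    exact congrArg Multiplicative.toAdd this
  have h1 := congrFun h0 p
  have hyw' : (y : FreeGroup α) = w := hyw
  rw [hyw'] at h1
  simpa using h1

end PartD
-- part E : ZMod helpers
section ZModHelp
variable {n : ℕ} [NeZero n]

theorem zcast_val (j : ZMod n) : ((j.val : ℕ) : ZMod n) = j := by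
  rw [ZMod.natCast_val, ZMod.cast_id]

theorem zval_add_one (j : ZMod n) :
    (j + 1).val = if j.val + 1 = n then 0 else j.val + 1 := by
  have h1 : ((j.val + 1 : ℕ) : ZMod n) = j + 1 := by push_cast [zcast_val]; ring
  split_ifs with h
  · rw [← h1, h, ZMod.natCast_self, ZMod.val_zero]
  · rw [← h1, ZMod.val_cast_of_lt]
    have := ZMod.val_lt j
    omega

theorem zval_sub_of_le {u v : ZMod n} (h : u.val ≤ v.val) :
    (v - u).val = v.val - u.val := by
  have h1 : ((v.val - u.val : ℕ) : ZMod n) = v - u := by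
    push_cast [Nat.cast_sub h, zcast_val]; ring
  rw [← h1, ZMod.val_cast_of_lt]
  have := ZMod.val_lt v
  omega

theorem zval_sub_of_gt {u v : ZMod n} (h : v.val < u.val) :
    (v - u).val = n + v.val - u.val := by
  have hu := ZMod.val_lt u
  have h1 : ((n + v.val - u.val : ℕ) : ZMod n) = v - u := by
    push_cast [Nat.cast_sub (by omega : u.val ≤ n + v.val), zcast_val, ZMod.natCast_self]
    ring
  rw [← h1, ZMod.val_cast_of_lt]
  omega

end ZModHelp
-- part F : the core lemma
section Core

theorem core (d : ℕ)
    (ih : ∀ v : FreeGroup α, v ≠ 1 → v ∈ derivedSeries (FreeGroup α) d → 3 ^ d ≤ v.toWord.length)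
    (w : FreeGroup α) (hw : w ≠ 1) (hmem : w ∈ derivedSeries (FreeGroup α) (d + 1))
    (hcyc : ∀ x y : α × Bool, w.toWord.head? = some x → w.toWord.getLast? = some y →
      ¬(y.1 = x.1 ∧ y.2 = !x.2)) :
    3 ^ (d + 1) ≤ w.toWord.length := by
  classical
  haveI hNormal : (derivedSeries (FreeGroup α) d).Normal := derivedSeries_normal _ _
  set N := derivedSeries (FreeGroup α) d with hN
  let π : FreeGroup α →* (FreeGroup α ⧸ N) := QuotientGroup.mk' N
  have hker : π.ker = N := QuotientGroup.ker_mk' N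
  set L := w.toWord with hL
  have hn0' : 0 < L.length := by
    rcases Nat.eq_zero_or_pos L.length with h | h
    · exact absurd (FreeGroup.toWord_eq_nil_iff.mp (List.length_eq_zero_iff.mp h)) hw
    · exact h
  set n := L.length with hn
  have hn0 : 0 < n := hn0'
  haveI : NeZero n := ⟨hn0.ne'⟩
  have hval : ∀ j : ZMod n, j.val < L.length := fun j => ZMod.val_lt j
  set ℓ : ZMod n → α × Bool := fun j => L.get ⟨j.val, hval j⟩ with hℓ
  set Vc : ZMod n → (FreeGroup α ⧸ N) := fun j => π (FreeGroup.mk (L.take j.val)) with hVc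
  have hVcd : ∀ j : ZMod n, Vc j = π (FreeGroup.mk (L.take j.val)) := fun _ => rfl
  have hℓd : ∀ (j : ZMod n), ℓ j = L.get ⟨j.val, hval j⟩ := fun _ => rfl
  -- w maps to 1
  have hwN : w ∈ N := by
    have h' := hmem
    rw [derivedSeries_succ] at h'
    exact Subgroup.commutator_le_left _ _ h'
  have hπw : π w = 1 := by
    rw [← MonoidHom.mem_ker, hker]; exact hwN
  have hπL : π (FreeGroup.mk L) = 1 := by rw [hL, FreeGroup.mk_toWord]; exact hπw
  have hπnil : π (FreeGroup.mk ([] : List (α × Bool))) = 1 := by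
    rw [mk_nil_eq_one]; exact π.map_one
  have htaken : π (FreeGroup.mk (L.take n)) = 1 := by
    rw [hn, List.take_length]; exact hπL
  -- step lemma
  have STEP : ∀ (m : ℕ) (h : m < L.length),
      π (FreeGroup.mk (L.take (m + 1))) = π (FreeGroup.mk (L.take m)) * sg π (L.get ⟨m, h⟩) := by
    intro m h
    rw [← List.take_concat_get h, List.concat_eq_append, pi_mk_concat]
    rfl
  have C1 : ∀ j : ZMod n, Vc (j + 1) = Vc j * sg π (ℓ j) := by
    intro j
    rw [hVcd, hVcd, hℓd]
    by_cases hj : j.val + 1 = n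
    · have h1 : (j + 1).val = 0 := by rw [zval_add_one, if_pos hj]
      rw [h1, List.take_zero, hπnil, ← STEP j.val (hval j), hj, htaken]
    · have h1 : (j + 1).val = j.val + 1 := by rw [zval_add_one, if_neg hj]
      rw [h1]
      exact STEP j.val (hval j)
  -- prefix values
  have VTAKE : ∀ m : ℕ, m ≤ n → π (FreeGroup.mk (L.take m)) = Vc ((m : ℕ) : ZMod n) := by
    intro m hm
    rcases eq_or_lt_of_le hm with h | h
    · subst h
      rw [htaken, hVcd]
      simp only [ZMod.natCast_self, ZMod.val_zero, List.take_zero]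
      rw [hπnil]
    · rw [hVcd]; rw [ZMod.val_cast_of_lt h]
  -- flow vanishing and count equality
  have hflow : ∀ p, flow π 1 L p = 0 := by
    intro p; rw [hL]; exact flow_vanish π d hker w hmem p
  have hcount : ∀ p, (evList π 1 L).count (p, true) = (evList π 1 L).count (p, false) := by
    intro p
    have := hflow p
    rw [flow_eq_count] at this
    omega
  -- the edge of step j
  set Ej : ZMod n → (FreeGroup α ⧸ N) × α :=
    fun j => ((if (ℓ j).2 then Vc j else Vc (j + 1)), (ℓ j).1) with hEj
  have EVC : ∀ j : ZMod n, (evList π 1 L)[j.val]? = some (Ej j, (ℓ j).2) := by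
    intro j
    rw [evList_get?]
    have hg : L[j.val]? = some (ℓ j) := List.getElem?_eq_getElem (hval j)
    rw [hg]
    simp only [Option.map_some]
    congr 1
    have h2 : π (FreeGroup.mk (L.take (j.val + 1))) = Vc (j + 1) := by
      rw [VTAKE (j.val + 1) (hval j), Nat.cast_add, Nat.cast_one, zcast_val]
    rcases hb : (ℓ j).2 with _ | _ <;>
      simp [hEj, hb, hVc, h2, one_mul]
  -- existence of a reversal step
  have RHO : ∀ j : ZMod n, ∃ k : ZMod n,
      (ℓ k).1 = (ℓ j).1 ∧ (ℓ k).2 = !(ℓ j).2 ∧ Vc k = Vc (j + 1) ∧ Vc (k + 1) = Vc j := by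
    intro j
    have hmem1 : ((Ej j, (ℓ j).2) : ((FreeGroup α ⧸ N) × α) × Bool) ∈ evList π 1 L :=
      List.mem_of_getElem? (EVC j)
    have hpos2 : 0 < (evList π 1 L).count (Ej j, !(ℓ j).2) := by
      have h1 : 0 < (evList π 1 L).count (Ej j, (ℓ j).2) := List.count_pos_iff.mpr hmem1
      have h2 := hcount (Ej j)
      cases hb : (ℓ j).2 <;> rw [hb] at h1 <;> simp only [Bool.not_true, Bool.not_false] <;> omega
    have hmem2 := List.count_pos_iff.mp hpos2
    rcases List.mem_iff_getElem.mp hmem2 with ⟨m, hm, hgot⟩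
    have hmn : m < n := by rwa [evList_length] at hm
    refine ⟨((m : ℕ) : ZMod n), ?_⟩
    have hkval : (((m : ℕ) : ZMod n)).val = m := ZMod.val_cast_of_lt hmn
    set k : ZMod n := ((m : ℕ) : ZMod n) with hkdef
    have hEVk := EVC k
    rw [hkval] at hEVk
    rw [List.getElem?_eq_getElem hm] at hEVk
    rw [hgot] at hEVk
    have hEVk' : (Ej k, (ℓ k).2) = ((Ej j, !(ℓ j).2) : ((FreeGroup α ⧸ N) × α) × Bool) :=
      (Option.some_injective _ hEVk).symm
    have hsgn : (ℓ k).2 = !(ℓ j).2 := (Prod.mk.injEq _ _ _ _).mp hEVk' |>.2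
    have hedge : Ej k = Ej j := (Prod.mk.injEq _ _ _ _).mp hEVk' |>.1
    have hletter : (ℓ k).1 = (ℓ j).1 := by
      have := congrArg Prod.snd hedge
      simpa [hEj] using this
    have h1 := congrArg Prod.fst hedge
    simp only [hEj] at h1
    refine ⟨hletter, hsgn, ?_, ?_⟩
    · -- Vc k = Vc (j+1)
      cases hbj : (ℓ j).2
      · rw [hbj] at hsgn
        simp only [Bool.not_false] at hsgn
        rw [hsgn, hbj] at h1
        simpa using h1
      · rw [hbj] at hsgn
        simp only [Bool.not_true] at hsgn
        rw [hsgn, hbj] at h1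
        simp only [Bool.false_eq_true, if_false, if_true] at h1
        -- h1 : Vc (k+1) = Vc j
        have hlk : ℓ k = ((ℓ j).1, false) := Prod.ext hletter hsgn
        have hlj : ℓ j = ((ℓ j).1, true) := Prod.ext rfl hbj
        have hc1k := C1 k
        have hc1j := C1 j
        rw [hlk] at hc1k
        rw [hlj] at hc1j
        rw [h1] at hc1k
        rw [hc1j, hc1k]
        simp [sg]
    · -- Vc (k+1) = Vc j
      cases hbj : (ℓ j).2
      · rw [hbj] at hsgn
        simp only [Bool.not_false] at hsgn
        rw [hsgn, hbj] at h1
        simp only [Bool.false_eq_true, if_false, if_true] at h1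
        -- h1 : Vc k = Vc (j+1)
        have hlk : ℓ k = ((ℓ j).1, true) := Prod.ext hletter hsgn
        have hlj : ℓ j = ((ℓ j).1, false) := Prod.ext rfl hbj
        have hc1k := C1 k
        have hc1j := C1 j
        rw [hlk] at hc1k
        rw [hlj] at hc1j
        rw [h1] at hc1k
        rw [hc1k, hc1j]
        simp [sg]
      · rw [hbj] at hsgn
        simp only [Bool.not_true] at hsgn
        rw [hsgn, hbj] at h1
        simpa using h1
  -- cyclic reducedness
  have CYC : ∀ j : ZMod n, ¬((ℓ (j + 1)).1 = (ℓ j).1 ∧ (ℓ (j + 1)).2 = !(ℓ j).2) := by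
    rintro j ⟨h1, h2⟩
    by_cases hj : j.val + 1 = n
    · -- wraparound: ℓ (j+1) is the head, ℓ j the last letter
      have hv1 : (j + 1).val = 0 := by rw [zval_add_one, if_pos hj]
      have hjv : j.val = n - 1 := by omega
      have hhead : L.head? = some (ℓ (j + 1)) := by
        rw [List.head?_eq_getElem?, hℓd]
        simp only [hv1]
        rw [List.getElem?_eq_getElem hn0']
        simp [List.get_eq_getElem]
      have hlast : L.getLast? = some (ℓ j) := by
        rw [List.getLast?_eq_getElem?, hℓd]
        have hidx : L.length - 1 = j.val := by omega
        simp only [hidx]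
        rw [List.getElem?_eq_getElem (hval j)]
        simp [List.get_eq_getElem]
      refine hcyc (ℓ (j+1)) (ℓ j) hhead hlast ⟨h1.symm, ?_⟩
      rw [h2]
      simp
    · -- adjacent letters in the reduced word
      have hv1 : (j + 1).val = j.val + 1 := by rw [zval_add_one, if_neg hj]
      have hch := redW_toWord w
      rw [RedW, List.Chain', List.isChain_iff_getElem] at hch
      have hlt : j.val < L.length - 1 := by
        have := hval j
        omega
      have := hch j.val (by rw [← hL]; omega)
      apply this
      constructor
      · rw [hℓd, hℓd] at h1
        simp only [hv1] at h1
        exact h1.symm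
      · rw [hℓd, hℓd] at h2
        simp only [hv1] at h2
        simp only [List.get_eq_getElem] at h2
        change L[j.val].2 = !L[j.val + 1].2
        rw [h2]
        simp
  -- arc lemma from the induction hypothesis
  have ARC : ∀ a b : ZMod n, a ≠ b → Vc a = Vc b → 3 ^ d ≤ (b - a).val := by
    intro a b hab hV
    set Lrot := L.rotate a.val with hLrot
    have hrotlen : Lrot.length = n := by rw [hLrot, List.length_rotate]
    have havn : a.val ≤ L.length := le_of_lt (hval a)
    have hdrop : Lrot = L.drop a.val ++ L.take a.val := by
      rw [hLrot, List.rotate_eq_drop_append_take havn]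
    -- the rotated word is reduced (uses cyclic reducedness)
    have hRrot : RedW Lrot := by
      rw [hdrop]
      rcases Nat.eq_zero_or_pos a.val with h0 | h0
      · rw [h0]; simpa using redW_toWord w
      · apply List.isChain_append.mpr
        refine ⟨(redW_toWord w).drop _, (redW_toWord w).take _, ?_⟩
        intro x hx y hy
        have hdl : (L.drop a.val).getLast? = L.getLast? := by
          rw [List.getLast?_eq_getElem?, List.getLast?_eq_getElem?, List.getElem?_drop]
          congr 1
          rw [List.length_drop]
          have := hval a
          omega
        have hth : (L.take a.val).head? = L.head? := by
          rw [List.head?_eq_getElem?, List.head?_eq_getElem?, List.getElem?_take_of_lt h0]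
        rw [hdl] at hx
        rw [hth] at hy
        exact hcyc y x hy hx
    -- letters of the rotated word
    have ROTGET : ∀ s : ℕ, s < n → Lrot[s]? = some (ℓ (a + (s : ℕ))) := by
      intro s hs
      rw [hLrot, List.getElem?_rotate (by omega : s < L.length)]
      have hidx : (s + a.val) % L.length = (a + ((s : ℕ) : ZMod n)).val := by
        rw [ZMod.val_add, ZMod.val_cast_of_lt hs, ← hn, Nat.add_comm]
      rw [hidx, hℓd, List.getElem?_eq_getElem (hval _)]
      simp [List.get_eq_getElem]
    -- prefixes of the rotated word
    have PREF : ∀ s : ℕ, s ≤ n → π (FreeGroup.mk (Lrot.take s)) = (Vc a)⁻¹ * Vc (a + (s : ℕ)) := by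
      intro s
      induction s with
      | zero =>
        intro _
        simp only [List.take_zero, Nat.cast_zero, add_zero]
        rw [hπnil, inv_mul_cancel]
      | succ s ihs =>
        intro hs1
        have hs : s < n := by omega
        have hsrot : s < Lrot.length := by omega
        rw [← List.take_concat_get hsrot, List.concat_eq_append, pi_mk_concat]
        rw [ihs (by omega)]
        have hget : Lrot[s]'hsrot = ℓ (a + (s : ℕ)) := by
          have h' := ROTGET s hs
          rw [List.getElem?_eq_getElem hsrot] at h'
          exact Option.some_injective _ h'
        rw [hget, mul_assoc]
        congr 1
        rw [← C1 (a + (s : ℕ))]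
        congr 1
        push_cast
        ring
    have htn : (b - a).val < n := ZMod.val_lt _
    have ht0 : (b - a).val ≠ 0 := by
      intro h0
      exact hab (sub_eq_zero.mp ((ZMod.val_eq_zero _).mp h0)).symm
    set M := Lrot.take ((b - a).val) with hM
    have hMred : RedW M := hRrot.take _
    have hMlen : M.length = (b - a).val := by
      rw [hM, List.length_take, hrotlen]
      omega
    have hπM : π (FreeGroup.mk M) = 1 := by
      rw [hM, PREF _ (le_of_lt htn)]
      have hb' : a + (((b - a).val : ℕ) : ZMod n) = b := by rw [zcast_val]; ring
      rw [hb', ← hV, inv_mul_cancel]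
    have hvM : (FreeGroup.mk M) ∈ N := by
      have h' : FreeGroup.mk M ∈ π.ker := MonoidHom.mem_ker.mpr hπM
      rwa [hker] at h'
    have hvtoword : (FreeGroup.mk M).toWord = M := toWord_mk_of_redW hMred
    have hv1 : FreeGroup.mk M ≠ 1 := by
      intro h
      rw [h, FreeGroup.toWord_one] at hvtoword
      rw [← hvtoword] at hMlen
      simp at hMlen
      omega
    have hfin := ih (FreeGroup.mk M) hv1 hvM
    rw [hvtoword, hMlen] at hfin
    exact hfin
  by_cases hbig : ∃ g, 2 < (Finset.univ.filter (fun j : ZMod n => Vc j = g)).card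
  · -- some vertex visited three times
    rcases hbig with ⟨g, hg⟩
    rw [Finset.two_lt_card_iff] at hg
    rcases hg with ⟨a, b, c, ha, hb, hc, hab, hac, hbc⟩
    simp only [Finset.mem_filter, Finset.mem_univ, true_and] at ha hb hc
    have key : ∀ x y z : ZMod n, x.val < y.val → y.val < z.val →
        Vc x = g → Vc y = g → Vc z = g → 3 ^ (d + 1) ≤ n := by
      intro x y z hxy hyz hVx hVy hVz
      have h1 : 3 ^ d ≤ (y - x).val :=
        ARC x y (fun h => by rw [h] at hxy; omega) (hVx.trans hVy.symm)
      have h2 : 3 ^ d ≤ (z - y).val :=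
        ARC y z (fun h => by rw [h] at hyz; omega) (hVy.trans hVz.symm)
      have h3 : 3 ^ d ≤ (x - z).val :=
        ARC z x (fun h => by rw [h] at hyz; omega) (hVz.trans hVx.symm)
      rw [zval_sub_of_le (le_of_lt hxy)] at h1
      rw [zval_sub_of_le (le_of_lt hyz)] at h2
      rw [zval_sub_of_gt (lt_trans hxy hyz)] at h3
      have hzn : z.val < n := ZMod.val_lt z
      have hp : 3 ^ (d + 1) = 3 ^ d * 3 := pow_succ 3 d
      omega
    rcases Nat.lt_trichotomy a.val b.val with h1 | h1 | h1
    · rcases Nat.lt_trichotomy b.val c.val with h2 | h2 | h2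
      · exact key a b c h1 h2 ha hb hc
      · exact absurd (ZMod.val_injective n h2) hbc
      · rcases Nat.lt_trichotomy a.val c.val with h3 | h3 | h3
        · exact key a c b h3 h2 ha hc hb
        · exact absurd (ZMod.val_injective n h3) hac
        · exact key c a b h3 h1 hc ha hb
    · exact absurd (ZMod.val_injective n h1) hab
    · rcases Nat.lt_trichotomy a.val c.val with h2 | h2 | h2
      · exact key b a c h1 h2 hb ha hc
      · exact absurd (ZMod.val_injective n h2) hac
      · rcases Nat.lt_trichotomy b.val c.val with h3 | h3 | h3
        · exact key b c a h3 h2 hb hc ha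
        · exact absurd (ZMod.val_injective n h3) hbc
        · exact key c b a h3 h1 hc hb ha
  · -- every vertex visited at most twice: contradiction
    exfalso
    have EX1 : ∀ j k : ZMod n, (ℓ k).1 = (ℓ j).1 → (ℓ k).2 = !(ℓ j).2 → k ≠ j + 1 := by
      intro j k h1 h2 hk
      exact CYC j ⟨by rw [← hk]; exact h1, by rw [← hk]; exact h2⟩
    have EX2 : ∀ j k : ZMod n, (ℓ k).1 = (ℓ j).1 → (ℓ k).2 = !(ℓ j).2 → k + 1 ≠ j := by
      intro j k h1 h2 hk
      apply CYC k
      constructor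
      · rw [hk, h1]
      · rw [hk, h2]; simp
    have EX3 : ∀ j k : ZMod n, (ℓ k).2 = !(ℓ j).2 → k ≠ j := by
      intro j k h2 hk
      rw [hk] at h2
      simp at h2
    have FIB : ∀ j k m : ZMod n, Vc k = Vc (j + 1) → k ≠ j + 1 → Vc m = Vc (j + 1) →
        m = j + 1 ∨ m = k := by
      intro j k m hVk hkj hVm
      by_contra hcon
      push_neg at hcon
      apply hbig
      refine ⟨Vc (j + 1), Finset.two_lt_card_iff.mpr ⟨m, j + 1, k, ?_, ?_, ?_, hcon.1, hcon.2, Ne.symm hkj⟩⟩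
      · simp [hVm]
      · simp
      · simp [hVk]
    choose ρ h1ρ h2ρ h3ρ h4ρ using RHO
    have SUCC : ∀ j : ZMod n, ρ (j + 1) = ρ j - 1 := by
      intro j
      have hne : ρ (j + 1) + 1 ≠ j + 1 := EX2 (j + 1) (ρ (j + 1)) (h1ρ (j + 1)) (h2ρ (j + 1))
      have hm := FIB j (ρ j) (ρ (j + 1) + 1) (h3ρ j) (EX1 j (ρ j) (h1ρ j) (h2ρ j)) (h4ρ (j + 1))
      rcases hm with h | h
      · exact absurd h hne
      · rw [← h]; ring
    have LIN : ∀ m : ℕ, ρ ((m : ℕ) : ZMod n) = ρ 0 - ((m : ℕ) : ZMod n) := by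
      intro m
      induction m with
      | zero => simp
      | succ m ihm =>
        have hc : ((m + 1 : ℕ) : ZMod n) = ((m : ℕ) : ZMod n) + 1 := by push_cast; ring
        rw [hc, SUCC, ihm]
        push_cast
        ring
    have ALL : ∀ j : ZMod n, ρ j = ρ 0 - j := by
      intro j
      have h' := LIN j.val
      rwa [zcast_val] at h'
    rcases Nat.even_or_odd ((ρ 0).val) with ⟨t, ht⟩ | ⟨t, ht⟩
    · have hc : ρ 0 = ((t : ℕ) : ZMod n) + ((t : ℕ) : ZMod n) := by
        rw [← zcast_val (ρ 0), ht]; push_cast; ring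
      have hfix : ρ ((t : ℕ) : ZMod n) = ((t : ℕ) : ZMod n) := by
        rw [ALL, hc]; ring
      exact EX3 _ _ (h2ρ ((t : ℕ) : ZMod n)) hfix
    · have hc : ρ 0 = ((t : ℕ) : ZMod n) + ((t : ℕ) : ZMod n) + 1 := by
        rw [← zcast_val (ρ 0), ht]; push_cast; ring
      have hfix : ρ ((t : ℕ) : ZMod n) = ((t : ℕ) : ZMod n) + 1 := by
        rw [ALL, hc]; ring
      exact EX1 _ _ (h1ρ ((t : ℕ) : ZMod n)) (h2ρ ((t : ℕ) : ZMod n)) hfix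

end Core

-- part G : main induction
theorem main (d : ℕ) (w : FreeGroup α) (hw : w ≠ 1)
    (hmem : w ∈ derivedSeries (FreeGroup α) d) : 3 ^ d ≤ w.toWord.length := by
  induction d generalizing w with
  | zero =>
    have h1 : w.toWord ≠ [] := fun h => hw (FreeGroup.toWord_eq_nil_iff.mp h)
    have h2 := List.length_pos_iff.mpr h1
    simpa [Nat.one_le_iff_ne_zero, Nat.pos_iff_ne_zero] using h2
  | succ d ihd =>
    suffices h : ∀ (B : ℕ) (v : FreeGroup α), v.toWord.length ≤ B → v ≠ 1 →
        v ∈ derivedSeries (FreeGroup α) (d + 1) → 3 ^ (d + 1) ≤ v.toWord.length by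
      exact h w.toWord.length w le_rfl hw hmem
    intro B
    induction B with
    | zero =>
      intro v hlen hv _
      exact absurd (FreeGroup.toWord_eq_nil_iff.mp (List.length_eq_zero_iff.mp (Nat.le_zero.mp hlen))) hv
    | succ B ihB =>
      intro v hlen hv hvmem
      by_cases hcyc : ∀ x y : α × Bool, v.toWord.head? = some x → v.toWord.getLast? = some y →
          ¬(y.1 = x.1 ∧ y.2 = !x.2)
      · exact core d ihd v hv hvmem hcyc
      · push_neg at hcyc
        rcases hcyc with ⟨x, y, hx, hy, h1, h2⟩
        rcases List.head?_eq_some_iff.mp hx with ⟨T, hT⟩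
        have hTne : T ≠ [] := by
          intro h0
          rw [h0] at hT
          rw [hT] at hy
          simp only [List.getLast?_singleton, Option.some_inj] at hy
          rw [← hy] at h1 h2
          simp at h2
        have hylast : T.getLast hTne = y := by
          rw [hT] at hy
          rw [List.getLast?_eq_getLast (l := x :: T) (by simp)] at hy
          have := Option.some_injective _ hy
          rw [← this, List.getLast_cons hTne]
        have hTdecomp : T = T.dropLast ++ [y] := by
          conv_lhs => rw [← List.dropLast_concat_getLast hTne]
          rw [hylast]
        set Mid := T.dropLast with hMid
        have hdecomp : v.toWord = x :: (Mid ++ [y]) := by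
          rw [hT, ← hTdecomp]
        have hy' : y = (x.1, !x.2) := Prod.ext h1 h2
        have hvdec : v = FreeGroup.mk [x] * FreeGroup.mk Mid * (FreeGroup.mk [x])⁻¹ := by
          rw [← mk_singleton_inv x, ← hy']
          rw [FreeGroup.mul_mk, FreeGroup.mul_mk]
          rw [← FreeGroup.mk_toWord (x := v), hdecomp]
          exact congrArg FreeGroup.mk (by simp)
        have hmidmem : FreeGroup.mk Mid ∈ derivedSeries (FreeGroup α) (d + 1) := by
          have hconj : FreeGroup.mk Mid = (FreeGroup.mk [x])⁻¹ * v * (FreeGroup.mk [x]) := by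
            rw [hvdec]; group
          rw [hconj]
          have := (derivedSeries_normal (FreeGroup α) (d + 1)).conj_mem v hvmem (FreeGroup.mk [x])⁻¹
          rwa [inv_inv] at this
        have hmidne : FreeGroup.mk Mid ≠ 1 := by
          intro h0
          rw [h0] at hvdec
          rw [mul_one] at hvdec
          rw [mul_inv_cancel] at hvdec
          exact hv hvdec
        have hmidred : RedW Mid := by
          apply List.IsChain.infix (redW_toWord v)
          exact ⟨[x], [y], by rw [hdecomp]; simp⟩
        have hmidtoword : (FreeGroup.mk Mid).toWord = Mid := toWord_mk_of_redW hmidred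
        have hlenv : v.toWord.length = Mid.length + 2 := by
          rw [hdecomp]; simp
        have hres := ihB (FreeGroup.mk Mid) (by rw [hmidtoword]; omega) hmidne hmidmem
        rw [hmidtoword] at hres
        omega

end Stmt2Aux


/-- If `w` is a nontrivial element of the free group of rank `r` lying in the `d`-th derived
subgroup `F^{(d)}` (i.e. `w = 1` in the free solvable group `S_{r,d} = F/F^{(d)}`), then the
length of the reduced word representing `w` is at least `3^d`. -/
theorem stmt2 (r d : ℕ) (w : FreeGroup (Fin r)) (hw : w ≠ 1)
    (hmem : w ∈ derivedSeries (FreeGroup (Fin r)) d) :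
    3 ^ d ≤ w.toWord.length := Stmt2Aux.main d w hw hmem
end

section
/- Let N be a normal subgroup of the free group F and let u, v ∈ F. Then u = v in F/[N,N] if and only if u and v define the same flow on the Cayley graph of F/N. -/
open scoped Classical

/-- The flow defined by a word (list of signed letters) traced in the Cayley graph of a
group `G` with respect to generators `emb : X → G`, starting at a given vertex.
For the positive edge from vertex `a` labeled `y` (going from `a` to `a * emb y`) it
records the algebraic number of traversals. -/
noncomputable def grpFlow {G X : Type*} [Group G] (emb : X → G) :
    G → List (X × Bool) → G → X → ℤ
  | _, [], _, _ => 0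
  | g, (x, true) :: c, a, y =>
      (if a = g ∧ y = x then 1 else 0) + grpFlow emb (g * emb x) c a y
  | g, (x, false) :: c, a, y =>
      (if a = g * (emb x)⁻¹ ∧ y = x then -1 else 0) + grpFlow emb (g * (emb x)⁻¹) c a y

namespace Stmt3Aux

variable {G X : Type*} [Group G] (emb : X → G)

/-- Finsupp version of the flow. -/
noncomputable def flowF : G → List (X × Bool) → ((G × X) →₀ ℤ)
  | _, [] => 0
  | g, (x, true) :: c => Finsupp.single (g, x) 1 + flowF (g * emb x) c
  | g, (x, false) :: c =>
      Finsupp.single (g * (emb x)⁻¹, x) (-1) + flowF (g * (emb x)⁻¹) c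

lemma flowF_apply (w : List (X × Bool)) (g a : G) (y : X) :
    flowF emb g w (a, y) = grpFlow emb g w a y := by
  induction w generalizing g with
  | nil => simp [flowF, grpFlow]
  | cons p c ih =>
    obtain ⟨x, b⟩ := p
    cases b <;>
      simp [flowF, grpFlow, ih, Finsupp.single_apply, Prod.ext_iff] <;>
      · congr 1
        by_cases h1 : a = g * (emb x)⁻¹ <;> by_cases h2 : y = x <;>
          simp [h1, h2, eq_comm]

/-- the product of a word in `G`. -/
noncomputable def wprod (w : List (X × Bool)) : G :=
  List.prod (w.map fun x => cond x.2 (emb x.1) (emb x.1)⁻¹)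

@[simp] lemma wprod_nil : wprod emb ([] : List (X × Bool)) = 1 := rfl

@[simp] lemma wprod_cons_true (x : X) (c : List (X × Bool)) :
    wprod emb ((x, true) :: c) = emb x * wprod emb c := by simp [wprod]

@[simp] lemma wprod_cons_false (x : X) (c : List (X × Bool)) :
    wprod emb ((x, false) :: c) = (emb x)⁻¹ * wprod emb c := by simp [wprod]

lemma wprod_eq_lift (L : List (X × Bool)) :
    wprod emb L = FreeGroup.lift emb (FreeGroup.mk L) := by
  rw [FreeGroup.lift_mk]; rfl

lemma flowF_append (L₁ L₂ : List (X × Bool)) (g : G) :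
    flowF emb g (L₁ ++ L₂) = flowF emb g L₁ + flowF emb (g * wprod emb L₁) L₂ := by
  induction L₁ generalizing g with
  | nil => simp [flowF]
  | cons p c ih =>
    obtain ⟨x, b⟩ := p
    cases b <;> simp [flowF, ih, add_assoc, mul_assoc]

lemma flowF_step {L₁ L₂ : List (X × Bool)} (h : FreeGroup.Red.Step L₁ L₂) (g : G) :
    flowF emb g L₁ = flowF emb g L₂ := by
  cases h with
  | @not L₁ L₂ x b =>
    rw [flowF_append, flowF_append]
    congr 1
    cases b <;> simp [flowF, mul_assoc]

lemma flowF_red {L₁ L₂ : List (X × Bool)} (h : FreeGroup.Red L₁ L₂) (g : G) :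
    flowF emb g L₁ = flowF emb g L₂ := by
  induction h with
  | refl => rfl
  | tail _ step ih => rw [ih, flowF_step emb step]

/-- the flow of a free group element. -/
noncomputable def flowOf (u : FreeGroup X) (g : G) : (G × X) →₀ ℤ :=
  flowF emb g u.toWord

lemma flowOf_mul (u v : FreeGroup X) (g : G) :
    flowOf emb (u * v) g
      = flowOf emb u g + flowOf emb v (g * FreeGroup.lift emb u) := by
  have h1 : u * v = FreeGroup.mk (u.toWord ++ v.toWord) := by
    rw [← FreeGroup.mul_mk, FreeGroup.mk_toWord, FreeGroup.mk_toWord]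
  have h2 : (u * v).toWord = FreeGroup.reduce (u.toWord ++ v.toWord) := by
    rw [h1, FreeGroup.toWord_mk]
  unfold flowOf
  rw [h2, ← flowF_red emb (FreeGroup.reduce.red) g, flowF_append,
    wprod_eq_lift, FreeGroup.mk_toWord]

@[simp] lemma flowOf_one (g : G) : flowOf emb 1 g = 0 := by
  simp [flowOf, FreeGroup.toWord_one, flowF]

lemma flowOf_inv (u : FreeGroup X) (g : G) :
    flowOf emb u⁻¹ (g * FreeGroup.lift emb u) = - flowOf emb u g := by
  have := flowOf_mul emb u u⁻¹ g
  simp only [mul_inv_cancel, flowOf_one] at this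
  exact eq_neg_of_add_eq_zero_right this.symm


/-- Elements with zero flow everywhere form a subgroup. -/
noncomputable def zeroFlow : Subgroup (FreeGroup X) where
  carrier := {c | ∀ g : G, flowOf emb c g = 0}
  one_mem' := by intro g; simp
  mul_mem' := by
    intro a b ha hb g
    rw [flowOf_mul, ha, hb, add_zero]
  inv_mem' := by
    intro a ha g
    have := flowOf_inv emb a (g * (FreeGroup.lift emb a)⁻¹)
    rw [ha] at this
    simpa using this

open scoped commutatorElement in
lemma commutator_mem_zeroFlow {a b : FreeGroup X}
    (ha : FreeGroup.lift emb a = 1) (hb : FreeGroup.lift emb b = 1) :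
    ⁅a, b⁆ ∈ zeroFlow emb := by
  intro g
  have hab : ∀ c d : FreeGroup X, FreeGroup.lift emb c = 1 →
      flowOf emb (c * d) g = flowOf emb c g + flowOf emb d g := by
    intro c d hc
    rw [flowOf_mul, hc, mul_one]
  have ha' : FreeGroup.lift emb a⁻¹ = 1 := by simp [ha]
  have hb' : FreeGroup.lift emb b⁻¹ = 1 := by simp [hb]
  have hA : flowOf emb a g + flowOf emb a⁻¹ g = 0 := by
    have := hab a a⁻¹ ha; simp at this; rw [← this]
  have hB : flowOf emb b g + flowOf emb b⁻¹ g = 0 := by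
    have := hab b b⁻¹ hb; simp at this; rw [← this]
  have h1 : FreeGroup.lift emb (a * b) = 1 := by simp [ha, hb]
  have h2 : FreeGroup.lift emb (a * b * a⁻¹) = 1 := by simp [ha, hb]
  show flowOf emb (a * b * a⁻¹ * b⁻¹) g = 0
  rw [hab _ _ h2, hab _ _ h1, hab _ _ ha]
  have : flowOf emb a g + flowOf emb b g + flowOf emb a⁻¹ g + flowOf emb b⁻¹ g
      = (flowOf emb a g + flowOf emb a⁻¹ g) + (flowOf emb b g + flowOf emb b⁻¹ g) := by
    abel
  rw [this, hA, hB, add_zero]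

/-- The boundary map. -/
noncomputable def bdry : ((G × X) →₀ ℤ) →+ (G →₀ ℤ) :=
  Finsupp.liftAddHom fun p =>
    zmultiplesHom _ (Finsupp.single (p.1 * emb p.2) 1 - Finsupp.single p.1 1)

@[simp] lemma bdry_single (p : G × X) (n : ℤ) :
    bdry emb (Finsupp.single p n)
      = n • (Finsupp.single (p.1 * emb p.2) 1 - Finsupp.single p.1 1) := by
  simp [bdry]

lemma bdry_flowF (w : List (X × Bool)) (g : G) :
    bdry emb (flowF emb g w)
      = Finsupp.single (g * wprod emb w) 1 - Finsupp.single g 1 := by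
  induction w generalizing g with
  | nil => simp [flowF]
  | cons p c ih =>
    obtain ⟨x, b⟩ := p
    cases b <;>
      · simp only [flowF, map_add, ih, bdry_single, wprod_cons_true,
          wprod_cons_false, ← mul_assoc]
        simp only [smul_sub, one_smul, neg_smul, sub_neg_eq_add, mul_assoc, inv_mul_cancel, mul_one]
        abel


lemma mk_cons_true (x : X) (c : List (X × Bool)) :
    FreeGroup.mk ((x, true) :: c) = FreeGroup.of x * FreeGroup.mk c := by
  show FreeGroup.mk ([(x, true)] ++ c) = _
  rw [← FreeGroup.mul_mk]; rfl

lemma mk_single_false (x : X) :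
    FreeGroup.mk [(x, false)] = (FreeGroup.of x)⁻¹ := by
  apply eq_inv_of_mul_eq_one_left
  have h : FreeGroup.Red.Step ([] ++ (x, false) :: (x, !false) :: ([] : List (X × Bool)))
      ([] ++ [] : List (X × Bool)) := FreeGroup.Red.Step.not
  have := Quot.sound h
  rw [FreeGroup.quot_mk_eq_mk, FreeGroup.quot_mk_eq_mk] at this
  calc FreeGroup.mk [(x, false)] * FreeGroup.of x
      = FreeGroup.mk ([(x, false)] ++ [(x, true)]) := FreeGroup.mul_mk
    _ = 1 := by rw [FreeGroup.one_eq_mk]; exact this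

lemma mk_cons_false (x : X) (c : List (X × Bool)) :
    FreeGroup.mk ((x, false) :: c) = (FreeGroup.of x)⁻¹ * FreeGroup.mk c := by
  show FreeGroup.mk ([(x, false)] ++ c) = _
  rw [← FreeGroup.mul_mk, mk_single_false]

section Quot

variable {X : Type} (N : Subgroup (FreeGroup X)) [N.Normal]

/-- the generators in the quotient. -/
noncomputable def embN : X → FreeGroup X ⧸ N := fun x => QuotientGroup.mk (FreeGroup.of x)

/-- a transversal for N sending 1 to 1. -/
noncomputable def secN : (FreeGroup X ⧸ N) → FreeGroup X := fun g =>
  if g = 1 then 1 else g.out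

@[simp] lemma secN_spec (g : FreeGroup X ⧸ N) :
    (QuotientGroup.mk (secN N g) : FreeGroup X ⧸ N) = g := by
  unfold secN
  split_ifs with h
  · simp [h]
  · exact QuotientGroup.out_eq' g

@[simp] lemma secN_one : secN N 1 = 1 := if_pos rfl

/-- Schreier generator. -/
noncomputable def tN (g : FreeGroup X ⧸ N) (x : X) : FreeGroup X :=
  secN N g * FreeGroup.of x * (secN N (g * embN N x))⁻¹

lemma tN_mem (g : FreeGroup X ⧸ N) (x : X) : tN N g x ∈ N := by
  rw [← QuotientGroup.eq_one_iff (N := N)]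
  unfold tN
  rw [QuotientGroup.mk_mul, QuotientGroup.mk_mul, QuotientGroup.mk_inv]
  simp only [secN_spec, embN]
  group

/-- image of N in F/[N,N]. -/
noncomputable def HQ : Subgroup (FreeGroup X ⧸ ⁅N, N⁆) :=
  N.map (QuotientGroup.mk' ⁅N, N⁆)

open scoped commutatorElement in
lemma HQ_comm : ∀ a ∈ HQ N, ∀ b ∈ HQ N, a * b = b * a := by
  rintro _ ⟨a, ha, rfl⟩ _ ⟨b, hb, rfl⟩
  rw [← map_mul, ← map_mul]
  have : (a * b)⁻¹ * (b * a) ∈ ⁅N, N⁆ := by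
    have h : (a * b)⁻¹ * (b * a) = ⁅b⁻¹, a⁻¹⁆ := by
      show _ = b⁻¹ * a⁻¹ * (b⁻¹)⁻¹ * (a⁻¹)⁻¹
      group
    rw [h]
    exact Subgroup.commutator_mem_commutator (N.inv_mem hb) (N.inv_mem ha)
  exact QuotientGroup.eq.mpr this

noncomputable instance : CommGroup (HQ N) :=
  { (inferInstance : Group (HQ N)) with
    mul_comm := fun a b => Subtype.ext (HQ_comm N a a.2 b b.2) }

/-- Schreier generator in HQ. -/
noncomputable def tauN (p : (FreeGroup X ⧸ N) × X) : HQ N :=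
  ⟨QuotientGroup.mk' ⁅N, N⁆ (tN N p.1 p.2), ⟨_, tN_mem N p.1 p.2, rfl⟩⟩

/-- flow-to-HQ pairing. -/
noncomputable def psiN : (((FreeGroup X ⧸ N) × X) →₀ ℤ) →+ Additive (HQ N) :=
  Finsupp.liftAddHom fun p => zmultiplesHom _ (Additive.ofMul (tauN N p))

@[simp] lemma psiN_single (p : (FreeGroup X ⧸ N) × X) (n : ℤ) :
    Additive.toMul (psiN N (Finsupp.single p n)) = tauN N p ^ n := by
  simp [psiN]

lemma key (w : List (X × Bool)) (g : FreeGroup X ⧸ N) :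
    (QuotientGroup.mk (secN N g * FreeGroup.mk w) : FreeGroup X ⧸ ⁅N, N⁆)
      = ((Additive.toMul (psiN N (flowF (embN N) g w)) : HQ N)
          : FreeGroup X ⧸ ⁅N, N⁆) *
        QuotientGroup.mk (secN N (g * wprod (embN N) w)) := by
  induction w generalizing g with
  | nil =>
    rw [← FreeGroup.one_eq_mk]
    simp [flowF]
  | cons p c ih =>
    obtain ⟨x, b⟩ := p
    cases b
    · -- false case
      set g' := g * (embN N x)⁻¹ with hg'
      have hg : g' * embN N x = g := by rw [hg']; group
      have halg : secN N g * FreeGroup.mk ((x, false) :: c)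
          = (tN N g' x)⁻¹ * (secN N g' * FreeGroup.mk c) := by
        rw [mk_cons_false, tN, hg]
        group
      rw [halg, QuotientGroup.mk_mul, ih]
      have hflow : flowF (embN N) g ((x, false) :: c)
          = Finsupp.single (g', x) (-1) + flowF (embN N) g' c := rfl
      rw [hflow, map_add, toMul_add, psiN_single, zpow_neg, zpow_one]
      have hw : wprod (embN N) ((x, false) :: c) = (embN N x)⁻¹ * wprod (embN N) c := by
        simp
      rw [hw, ← mul_assoc g, ← hg']
      push_cast
      rw [QuotientGroup.mk_inv, ← mul_assoc]
      rfl
    · -- true case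
      have halg : secN N g * FreeGroup.mk ((x, true) :: c)
          = tN N g x * (secN N (g * embN N x) * FreeGroup.mk c) := by
        rw [mk_cons_true, tN]
        group
      rw [halg, QuotientGroup.mk_mul, ih]
      have hflow : flowF (embN N) g ((x, true) :: c)
          = Finsupp.single (g, x) 1 + flowF (embN N) (g * embN N x) c := rfl
      rw [hflow, map_add, toMul_add, psiN_single, zpow_one]
      have hw : wprod (embN N) ((x, true) :: c) = embN N x * wprod (embN N) c := by simp
      rw [hw, ← mul_assoc g]
      push_cast
      rw [← mul_assoc]
      rfl

end Quot

end Stmt3Aux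

/-- For a normal subgroup `N` of a free group `F`, two elements `u, v` are equal in
`F/[N,N]` if and only if they define the same flow on the Cayley graph of `F/N`. -/
theorem stmt3 {X : Type} (N : Subgroup (FreeGroup X)) [N.Normal] (u v : FreeGroup X) :
    (QuotientGroup.mk u : FreeGroup X ⧸ ⁅N, N⁆) = QuotientGroup.mk v ↔
      grpFlow (fun x => (QuotientGroup.mk (FreeGroup.of x) : FreeGroup X ⧸ N)) 1 u.toWord =
      grpFlow (fun x => (QuotientGroup.mk (FreeGroup.of x) : FreeGroup X ⧸ N)) 1 v.toWord := by
  classical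
  set emb : X → FreeGroup X ⧸ N := fun x => QuotientGroup.mk (FreeGroup.of x) with hemb
  have hembN : emb = Stmt3Aux.embN N := rfl
  have hlift : (FreeGroup.lift emb : FreeGroup X →* FreeGroup X ⧸ N)
      = QuotientGroup.mk' N := by
    apply FreeGroup.ext_hom
    intro x
    simp [hemb]
  constructor
  · intro h
    have hmem : u⁻¹ * v ∈ ⁅N, N⁆ := QuotientGroup.eq.mp h
    have hle : ⁅N, N⁆ ≤ Stmt3Aux.zeroFlow emb := by
      rw [Subgroup.commutator_le]
      intro a ha b hb
      exact Stmt3Aux.commutator_mem_zeroFlow emb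
        (by rw [hlift]; exact (QuotientGroup.eq_one_iff a).mpr ha)
        (by rw [hlift]; exact (QuotientGroup.eq_one_iff b).mpr hb)
    have hz : ∀ g, Stmt3Aux.flowOf emb (u⁻¹ * v) g = 0 := hle hmem
    have hv : v = u * (u⁻¹ * v) := by group
    have hkey : Stmt3Aux.flowOf emb v 1 = Stmt3Aux.flowOf emb u 1 := by
      conv_lhs => rw [hv]
      rw [Stmt3Aux.flowOf_mul, hz, add_zero]
    funext a y
    have h' := DFunLike.congr_fun hkey (a, y)
    simpa [Stmt3Aux.flowOf, Stmt3Aux.flowF_apply] using h'.symm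
  · intro h
    have hF : Stmt3Aux.flowF emb 1 u.toWord = Stmt3Aux.flowF emb 1 v.toWord := by
      ext p
      obtain ⟨a, y⟩ := p
      rw [Stmt3Aux.flowF_apply, Stmt3Aux.flowF_apply]
      exact congrFun (congrFun h a) y
    have hwu : Stmt3Aux.wprod emb u.toWord = (QuotientGroup.mk u : FreeGroup X ⧸ N) := by
      rw [Stmt3Aux.wprod_eq_lift, FreeGroup.mk_toWord, hlift]
      rfl
    have hwv : Stmt3Aux.wprod emb v.toWord = (QuotientGroup.mk v : FreeGroup X ⧸ N) := by
      rw [Stmt3Aux.wprod_eq_lift, FreeGroup.mk_toWord, hlift]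
      rfl
    have hend : (QuotientGroup.mk u : FreeGroup X ⧸ N) = QuotientGroup.mk v := by
      have hb := congrArg (Stmt3Aux.bdry emb) hF
      rw [Stmt3Aux.bdry_flowF, Stmt3Aux.bdry_flowF, hwu, hwv, one_mul, one_mul] at hb
      have h2 : (Finsupp.single (QuotientGroup.mk u : FreeGroup X ⧸ N) 1 : _ →₀ ℤ)
          = Finsupp.single (QuotientGroup.mk v : FreeGroup X ⧸ N) 1 :=
        sub_left_inj.mp hb
      exact (Finsupp.single_left_inj one_ne_zero).mp h2
    have ku := Stmt3Aux.key N u.toWord 1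
    have kv := Stmt3Aux.key N v.toWord 1
    rw [FreeGroup.mk_toWord] at ku kv
    simp only [Stmt3Aux.secN_one, one_mul] at ku kv
    rw [← hembN] at ku kv
    rw [hwu] at ku
    rw [hwv] at kv
    rw [ku, kv, hF, hend]
end

section
/- Let N be a normal subgroup of the free group F and γ: ℤF → ℤ(F/N) the canonical ring epimorphism. For u ∈ F, all Fox derivatives (∂u/∂x_i)^γ vanish (for i = 1, …, r) if and only if u ∈ [N,N]. -/
open scoped Classical

/-- The Fox derivative `∂u/∂x_i ∈ ℤF` of a word (given as a list of signed letters),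
accumulated with current prefix `p`:
`∂u/∂x_i = Σ_{j: i_j=i, ε_j=1} x_{i_1}^{ε_1}···x_{i_{j-1}}^{ε_{j-1}}
 − Σ_{j: i_j=i, ε_j=−1} x_{i_1}^{ε_1}···x_{i_j}^{ε_j}`. -/
noncomputable def foxDeriv {r : ℕ} (i : Fin r) :
    FreeGroup (Fin r) → List (Fin r × Bool) → MonoidAlgebra ℤ (FreeGroup (Fin r))
  | _, [] => 0
  | p, (x, true) :: c =>
      (if x = i then MonoidAlgebra.single p (1 : ℤ) else 0) +
        foxDeriv i (p * FreeGroup.of x) c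
  | p, (x, false) :: c =>
      (if x = i then -MonoidAlgebra.single (p * (FreeGroup.of x)⁻¹) (1 : ℤ) else 0) +
        foxDeriv i (p * (FreeGroup.of x)⁻¹) c

namespace FoxAux

variable {r : ℕ}

local notation "F" => FreeGroup (Fin r)
local notation "A" => MonoidAlgebra ℤ (FreeGroup (Fin r))

lemma mk_single (x : Fin r) (b : Bool) :
    FreeGroup.mk [(x, b)] = cond b (FreeGroup.of x) (FreeGroup.of x)⁻¹ := by
  cases b
  · show FreeGroup.mk [(x, false)] = (FreeGroup.of x)⁻¹
    rw [show FreeGroup.of x = FreeGroup.mk [(x, true)] from rfl, FreeGroup.inv_mk]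
    rfl
  · rfl

lemma mk_cons (x : Fin r) (b : Bool) (c : List (Fin r × Bool)) :
    FreeGroup.mk ((x, b) :: c) =
      (cond b (FreeGroup.of x) (FreeGroup.of x)⁻¹) * FreeGroup.mk c := by
  rw [← mk_single, FreeGroup.mul_mk]
  rfl

lemma foxDeriv_append (i : Fin r) (w₁ w₂ : List (Fin r × Bool)) :
    ∀ p : F, foxDeriv i p (w₁ ++ w₂) =
      foxDeriv i p w₁ + foxDeriv i (p * FreeGroup.mk w₁) w₂ := by
  induction w₁ with
  | nil =>
      intro p
      simp [foxDeriv, show FreeGroup.mk ([] : List (Fin r × Bool)) = 1 from rfl]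
  | cons hd tl ih =>
      intro p
      obtain ⟨x, b⟩ := hd
      cases b <;>
        · simp only [List.cons_append, foxDeriv, mk_cons, cond]
          rw [ih, mul_assoc, add_assoc]

lemma foxDeriv_step (i : Fin r) {w₁ w₂ : List (Fin r × Bool)}
    (h : FreeGroup.Red.Step w₁ w₂) (p : F) :
    foxDeriv i p w₁ = foxDeriv i p w₂ := by
  cases h with
  | @not L₁ L₂ x b =>
    rw [foxDeriv_append, foxDeriv_append]
    congr 1
    set q := p * FreeGroup.mk L₁
    cases b
    · show foxDeriv i q ((x, false) :: (x, true) :: L₂) = foxDeriv i q L₂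
      simp only [foxDeriv, inv_mul_cancel_right]
      split <;> simp
    · show foxDeriv i q ((x, true) :: (x, false) :: L₂) = foxDeriv i q L₂
      simp only [foxDeriv, mul_inv_cancel_right]
      split <;> simp

lemma foxDeriv_red (i : Fin r) {w₁ w₂ : List (Fin r × Bool)}
    (h : FreeGroup.Red w₁ w₂) (p : F) :
    foxDeriv i p w₁ = foxDeriv i p w₂ := by
  induction h with
  | refl => rfl
  | tail _ step ih => exact ih.trans (foxDeriv_step i step p)


lemma foxDeriv_shift (i : Fin r) (w : List (Fin r × Bool)) :
    ∀ p q : F, foxDeriv i (q * p) w = MonoidAlgebra.single q (1 : ℤ) * foxDeriv i p w := by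
  induction w with
  | nil => intro p q; simp [foxDeriv]
  | cons hd tl ih =>
      intro p q
      obtain ⟨x, b⟩ := hd
      cases b <;>
        · simp only [foxDeriv, mul_assoc, ih, mul_add, MonoidAlgebra.single_mul_single, mul_one,
            mul_ite, mul_zero, mul_neg]

/-- The Fox derivative as a function on the free group. -/
noncomputable def D (i : Fin r) (u : F) : A := foxDeriv i 1 u.toWord

lemma D_mk (i : Fin r) (L : List (Fin r × Bool)) :
    D i (FreeGroup.mk L) = foxDeriv i 1 L := by
  rw [D, FreeGroup.toWord_mk]
  exact (foxDeriv_red i FreeGroup.reduce.red 1).symm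

lemma D_one (i : Fin r) : D i (1 : F) = 0 := by
  rw [D, FreeGroup.toWord_one]; rfl

lemma D_mul (i : Fin r) (u v : F) :
    D i (u * v) = D i u + MonoidAlgebra.single u (1 : ℤ) * D i v := by
  conv_lhs => rw [← FreeGroup.mk_toWord (x := u), ← FreeGroup.mk_toWord (x := v)]
  rw [FreeGroup.mul_mk, D_mk, foxDeriv_append, FreeGroup.mk_toWord, one_mul]
  have h := foxDeriv_shift i v.toWord 1 u
  rw [mul_one] at h
  rw [h]
  rfl

lemma fund_aux (w : List (Fin r × Bool)) :
    ∀ p : F, MonoidAlgebra.single (p * FreeGroup.mk w) (1 : ℤ) =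
      MonoidAlgebra.single p (1 : ℤ) +
        ∑ i : Fin r, foxDeriv i p w *
          (MonoidAlgebra.single (FreeGroup.of i) (1 : ℤ) - 1) := by
  induction w with
  | nil =>
      intro p
      simp [foxDeriv, show FreeGroup.mk ([] : List (Fin r × Bool)) = 1 from rfl]
  | cons hd tl ih =>
      intro p
      obtain ⟨x, b⟩ := hd
      have hone : (1 : A) = MonoidAlgebra.single (1 : F) (1 : ℤ) := rfl
      cases b
      · have := ih (p * (FreeGroup.of x)⁻¹)
        rw [mk_cons]
        show MonoidAlgebra.single (p * ((FreeGroup.of x)⁻¹ * FreeGroup.mk tl)) (1 : ℤ) = _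
        rw [← mul_assoc, this]
        simp only [foxDeriv, add_mul, Finset.sum_add_distrib, ite_mul, zero_mul,
          Finset.sum_ite_eq, Finset.mem_univ, if_true]
        rw [neg_mul, mul_sub, MonoidAlgebra.single_mul_single, mul_one, inv_mul_cancel_right,
          mul_one, hone]
        abel
      · have := ih (p * FreeGroup.of x)
        rw [mk_cons]
        show MonoidAlgebra.single (p * (FreeGroup.of x * FreeGroup.mk tl)) (1 : ℤ) = _
        rw [← mul_assoc, this]
        simp only [foxDeriv, add_mul, Finset.sum_add_distrib, ite_mul, zero_mul,
          Finset.sum_ite_eq, Finset.mem_univ, if_true]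
        rw [mul_sub, MonoidAlgebra.single_mul_single, mul_one, mul_one, hone]
        abel

lemma fund (u : F) :
    MonoidAlgebra.single u (1 : ℤ) = 1 +
      ∑ i : Fin r, D i u * (MonoidAlgebra.single (FreeGroup.of i) (1 : ℤ) - 1) := by
  have := fund_aux u.toWord 1
  rw [FreeGroup.mk_toWord, one_mul] at this
  rw [this]
  rfl


section Quot

variable (N : Subgroup (FreeGroup (Fin r))) [N.Normal]

/-- The ring map `ℤF → ℤ(F/N)`. -/
noncomputable def gam : (MonoidAlgebra ℤ (FreeGroup (Fin r))) →+*
    MonoidAlgebra ℤ (FreeGroup (Fin r) ⧸ N) :=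
  MonoidAlgebra.mapDomainRingHom ℤ (QuotientGroup.mk' N)

lemma gam_single (u : F) (m : ℤ) :
    gam N (MonoidAlgebra.single u m) =
      MonoidAlgebra.single (QuotientGroup.mk' N u) m := by
  simp [gam, MonoidAlgebra.mapDomainRingHom_apply, Finsupp.mapDomain_single]

lemma gam_D_mul (i : Fin r) (u v : F) :
    gam N (D i (u * v)) = gam N (D i u) +
      MonoidAlgebra.single (QuotientGroup.mk' N u) (1 : ℤ) * gam N (D i v) := by
  rw [D_mul, map_add, map_mul, gam_single]

lemma gam_D_inv (i : Fin r) (u : F) (hu : QuotientGroup.mk' N u = 1) :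
    gam N (D i u⁻¹) = - gam N (D i u) := by
  have h := gam_D_mul N i u u⁻¹
  rw [mul_inv_cancel, D_one, map_zero, hu] at h
  have : MonoidAlgebra.single (1 : FreeGroup (Fin r) ⧸ N) (1 : ℤ) = 1 := rfl
  rw [this, one_mul] at h
  exact eq_neg_of_add_eq_zero_right h.symm


/-- The subgroup of elements of `F` that map to `1` in `F/N` and whose Fox derivatives
are killed by `gam`. -/
noncomputable def K : Subgroup (FreeGroup (Fin r)) where
  carrier := {u | QuotientGroup.mk' N u = 1 ∧ ∀ i : Fin r, gam N (D i u) = 0}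
  one_mem' := by
    refine ⟨map_one _, fun i => ?_⟩
    rw [D_one, map_zero]
  mul_mem' := by
    rintro u v ⟨hu1, hu2⟩ ⟨hv1, hv2⟩
    refine ⟨by rw [map_mul, hu1, hv1, one_mul], fun i => ?_⟩
    rw [gam_D_mul, hu2, hv2, mul_zero, add_zero]
  inv_mem' := by
    rintro u ⟨hu1, hu2⟩
    refine ⟨by rw [map_inv, hu1, inv_one], fun i => ?_⟩
    rw [gam_D_inv N i u hu1, hu2, neg_zero]

lemma commutator_le_K : ⁅N, N⁆ ≤ K N := by
  rw [Subgroup.commutator_le]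
  intro n hn m hm
  have hn1 : QuotientGroup.mk' N n = 1 := (QuotientGroup.eq_one_iff n).mpr hn
  have hm1 : QuotientGroup.mk' N m = 1 := (QuotientGroup.eq_one_iff m).mpr hm
  constructor
  · rw [map_commutatorElement, hn1, hm1]
    simp
  · intro i
    rw [commutatorElement_def]
    have hninv : QuotientGroup.mk' N n⁻¹ = 1 := by rw [map_inv, hn1, inv_one]
    rw [gam_D_mul, gam_D_mul, gam_D_mul, gam_D_inv N i n hn1, gam_D_inv N i m hm1]
    simp only [map_mul, map_inv, hn1, hm1, one_mul, mul_one, inv_one,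
      show MonoidAlgebra.single (1 : FreeGroup (Fin r) ⧸ N) (1 : ℤ) = 1 from rfl]
    abel


lemma mk'_eq_one_iff {u : FreeGroup (Fin r)} :
    QuotientGroup.mk' N u = 1 ↔ u ∈ N := by
  rw [QuotientGroup.mk'_apply, QuotientGroup.eq_one_iff]

/-- A section of the quotient map sending `1` to `1`. -/
noncomputable def sec (q : FreeGroup (Fin r) ⧸ N) : FreeGroup (Fin r) :=
  if q = 1 then 1 else q.out

lemma sec_one : sec N 1 = 1 := if_pos rfl

lemma mk_sec (q : FreeGroup (Fin r) ⧸ N) : QuotientGroup.mk' N (sec N q) = q := by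
  unfold sec
  split
  · rename_i h
    rw [map_one, h]
  · rw [QuotientGroup.mk'_apply]
    exact QuotientGroup.out_eq' q

lemma aux_mem (u : FreeGroup (Fin r)) :
    u * (sec N (QuotientGroup.mk' N u))⁻¹ ∈ N := by
  rw [← mk'_eq_one_iff, map_mul, map_inv, mk_sec, mul_inv_cancel]

/-- The coefficient function `u ↦ [u · sec(ū)⁻¹] ∈ N^{ab}`. -/
noncomputable def cfun (u : FreeGroup (Fin r)) : Additive (Abelianization ↥N) :=
  Additive.ofMul (Abelianization.of
    (⟨u * (sec N (QuotientGroup.mk' N u))⁻¹, aux_mem N u⟩ : ↥N))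

lemma cfun_of_mem {u : FreeGroup (Fin r)} (hu : u ∈ N) :
    cfun N u = Additive.ofMul (Abelianization.of ⟨u, hu⟩) := by
  have h1 : QuotientGroup.mk' N u = 1 := (mk'_eq_one_iff N).mpr hu
  have key : (⟨u * (sec N (QuotientGroup.mk' N u))⁻¹, aux_mem N u⟩ : ↥N) = ⟨u, hu⟩ := by
    apply Subtype.ext
    show u * (sec N (QuotientGroup.mk' N u))⁻¹ = u
    rw [h1, sec_one, inv_one, mul_one]
  rw [cfun, key]

lemma cfun_one : cfun N 1 = 0 := by
  rw [cfun_of_mem N N.one_mem]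
  have : (⟨(1 : FreeGroup (Fin r)), N.one_mem⟩ : ↥N) = 1 := rfl
  rw [this, map_one]
  rfl

lemma cfun_mul_left {n : FreeGroup (Fin r)} (hn : n ∈ N) (u : FreeGroup (Fin r)) :
    cfun N (n * u) = Additive.ofMul (Abelianization.of ⟨n, hn⟩) + cfun N u := by
  have h1 : QuotientGroup.mk' N (n * u) = QuotientGroup.mk' N u := by
    rw [map_mul, (mk'_eq_one_iff N).mpr hn, one_mul]
  have key : (⟨n * u * (sec N (QuotientGroup.mk' N (n * u)))⁻¹, aux_mem N (n * u)⟩ : ↥N)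
      = ⟨n, hn⟩ * ⟨u * (sec N (QuotientGroup.mk' N u))⁻¹, aux_mem N u⟩ := by
    apply Subtype.ext
    show n * u * (sec N (QuotientGroup.mk' N (n * u)))⁻¹
        = n * (u * (sec N (QuotientGroup.mk' N u))⁻¹)
    rw [h1, mul_assoc]
  rw [cfun, key, map_mul, ofMul_mul]
  rfl

/-- The linear map `θ : ℤF → N^{ab}`. -/
noncomputable def theta :
    MonoidAlgebra ℤ (FreeGroup (Fin r)) →ₗ[ℤ] Additive (Abelianization ↥N) :=
  Finsupp.linearCombination ℤ (cfun N) ∘ₗ (MonoidAlgebra.coeffLinearEquiv ℤ).toLinearMap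

lemma theta_single (u : FreeGroup (Fin r)) (m : ℤ) :
    theta N (MonoidAlgebra.single u m) = m • cfun N u :=
  by show Finsupp.linearCombination ℤ (cfun N) (Finsupp.single u m) = _
     exact Finsupp.linearCombination_single ℤ m u

/-- The difference function on the quotient. -/
noncomputable def efun (g : FreeGroup (Fin r)) (q : FreeGroup (Fin r) ⧸ N) :
    Additive (Abelianization ↥N) :=
  cfun N (sec N q * g) - cfun N (sec N q)

lemma efun_mk (g u : FreeGroup (Fin r)) :
    efun N g (QuotientGroup.mk' N u) = cfun N (u * g) - cfun N u := by
  set q := QuotientGroup.mk' N u with hq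
  have hn : u * (sec N q)⁻¹ ∈ N := aux_mem N u
  have h1 : cfun N (u * g)
      = Additive.ofMul (Abelianization.of ⟨u * (sec N q)⁻¹, hn⟩) + cfun N (sec N q * g) := by
    rw [show u * g = u * (sec N q)⁻¹ * (sec N q * g) by
      rw [← mul_assoc, inv_mul_cancel_right]]
    exact cfun_mul_left N hn _
  have h2 : cfun N u
      = Additive.ofMul (Abelianization.of ⟨u * (sec N q)⁻¹, hn⟩) + cfun N (sec N q) := by
    conv_lhs => rw [show u = u * (sec N q)⁻¹ * sec N q from (inv_mul_cancel_right u _).symm]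
    exact cfun_mul_left N hn _
  rw [efun, h1, h2]
  abel

/-- The linear map `Ψ_g : ℤ(F/N) → N^{ab}`. -/
noncomputable def psi (g : FreeGroup (Fin r)) :
    MonoidAlgebra ℤ (FreeGroup (Fin r) ⧸ N) →ₗ[ℤ] Additive (Abelianization ↥N) :=
  Finsupp.linearCombination ℤ (efun N g) ∘ₗ (MonoidAlgebra.coeffLinearEquiv ℤ).toLinearMap

lemma psi_single (g : FreeGroup (Fin r)) (q : FreeGroup (Fin r) ⧸ N) (m : ℤ) :
    psi N g (MonoidAlgebra.single q m) = m • efun N g q :=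
  by show Finsupp.linearCombination ℤ (efun N g) (Finsupp.single q m) = _
     exact Finsupp.linearCombination_single ℤ m q

lemma key_identity (g : FreeGroup (Fin r)) (a : MonoidAlgebra ℤ (FreeGroup (Fin r))) :
    theta N (a * MonoidAlgebra.single g 1) = theta N a + psi N g (gam N a) := by
  induction a using MonoidAlgebra.induction_linear with
  | zero => simp
  | add f h hf hh =>
      rw [add_mul, map_add, map_add (theta N), map_add (gam N), map_add (psi N g), hf, hh]
      abel
  | single u m =>
      rw [MonoidAlgebra.single_mul_single, mul_one, theta_single, theta_single,
        gam_single, psi_single, efun_mk, smul_sub]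
      abel


lemma mem_commutator_of (u : FreeGroup (Fin r))
    (h : ∀ i : Fin r, gam N (D i u) = 0) : u ∈ ⁅N, N⁆ := by
  -- Step 1: u ∈ N
  have h2 : gam N (MonoidAlgebra.single u (1 : ℤ)) = 1 := by
    rw [fund u, map_add, map_one, map_sum]
    simp only [map_mul, h, zero_mul, Finset.sum_const_zero, add_zero]
  rw [gam_single] at h2
  have h3 : QuotientGroup.mk' N u = 1 := by
    rw [show (1 : MonoidAlgebra ℤ (FreeGroup (Fin r) ⧸ N))
      = MonoidAlgebra.single 1 1 from rfl] at h2
    exact MonoidAlgebra.single_left_injective one_ne_zero h2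
  have hu : u ∈ N := (mk'_eq_one_iff N).mp h3
  -- Step 2: θ computation
  have t1 : theta N (MonoidAlgebra.single u (1 : ℤ))
      = Additive.ofMul (Abelianization.of (⟨u, hu⟩ : ↥N)) := by
    rw [theta_single, one_smul, cfun_of_mem N hu]
  have t2 : theta N (MonoidAlgebra.single u (1 : ℤ)) = 0 := by
    rw [fund u, map_add, map_sum]
    have hone : theta N (1 : MonoidAlgebra ℤ (FreeGroup (Fin r))) = 0 := by
      rw [show (1 : MonoidAlgebra ℤ (FreeGroup (Fin r)))
        = MonoidAlgebra.single 1 1 from rfl, theta_single, one_smul, cfun_one]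
    have hterm : ∀ i : Fin r,
        theta N (D i u * (MonoidAlgebra.single (FreeGroup.of i) (1 : ℤ) - 1)) = 0 := by
      intro i
      rw [mul_sub, mul_one, map_sub, key_identity, h i, map_zero, add_zero, sub_self]
    rw [hone]
    simp only [hterm, Finset.sum_const_zero, add_zero]
  have hof : Abelianization.of (⟨u, hu⟩ : ↥N) = 1 := by
    have := t1.symm.trans t2
    rwa [show (0 : Additive (Abelianization ↥N)) = Additive.ofMul 1 from rfl,
      Additive.ofMul.apply_eq_iff_eq] at this
  -- Step 3: conclude
  have hcomm : (⟨u, hu⟩ : ↥N) ∈ commutator ↥N := by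
    rw [show Abelianization.of (⟨u, hu⟩ : ↥N)
      = ((⟨u, hu⟩ : ↥N) : ↥N ⧸ commutator ↥N) from rfl] at hof
    exact (QuotientGroup.eq_one_iff _).mp hof
  have hmap : u ∈ Subgroup.map N.subtype (commutator ↥N) := ⟨⟨u, hu⟩, hcomm, rfl⟩
  rwa [commutator_def, Subgroup.map_commutator, ← MonoidHom.range_eq_map,
    Subgroup.range_subtype] at hmap

end Quot

end FoxAux

/-- Fox's theorem: for a normal subgroup `N` of the free group `F` and
`γ : ℤF → ℤ(F/N)` the canonical ring epimorphism, all Fox derivatives of `u ∈ F`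
are killed by `γ` if and only if `u ∈ [N,N]`. -/
theorem stmt4 {r : ℕ} (N : Subgroup (FreeGroup (Fin r))) [N.Normal]
    (u : FreeGroup (Fin r)) :
    (∀ i : Fin r,
      MonoidAlgebra.mapDomainRingHom ℤ (QuotientGroup.mk' N) (foxDeriv i 1 u.toWord) = 0) ↔
    u ∈ ⁅N, N⁆ := by
  constructor
  · intro h
    exact FoxAux.mem_commutator_of N u h
  · intro h i
    obtain ⟨-, h2⟩ := FoxAux.commutator_le_K N h
    exact h2 i
end

section
/- Let N be a normal subgroup of the free group F = F(x_1,…,x_r), let T be the free left ℤ(F/N)-module with basis t_1,…,t_r, and let M(F/N) be the group of 2×2 matrices of the form [[g, t],[0,1]] with g ∈ F/N, t ∈ T, under matrix multiplication. The homomorphism φ: F → M(F/N) sending x_i to [[x_i^γ, t_i],[0,1]] has kernel exactly [N,N]; hence it induces an embedding of F/[N,N] into M(F/N). -/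
/-- The Magnus matrix group `M(F/N)`: matrices `[[g, t],[0,1]]` with `g ∈ Q = F/N` and
`t` in the free left `ℤQ`-module of rank `r` with basis `t_1,…,t_r`, under matrix
multiplication `[[g,t],[0,1]]·[[g',t'],[0,1]] = [[gg', g·t' + t],[0,1]]`. -/
structure Magnus (Q : Type*) [Group Q] (r : ℕ) where
  g : Q
  t : Fin r → MonoidAlgebra ℤ Q

namespace Magnus

variable {Q : Type*} [Group Q] {r : ℕ}

theorem ext' : ∀ {x y : Magnus Q r}, x.g = y.g → x.t = y.t → x = y := by
  rintro ⟨g1, t1⟩ ⟨g2, t2⟩ rfl rfl; rfl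

noncomputable instance : One (Magnus Q r) := ⟨⟨1, 0⟩⟩

noncomputable instance : Mul (Magnus Q r) :=
  ⟨fun a b => ⟨a.g * b.g, fun i => a.t i + MonoidAlgebra.single a.g (1 : ℤ) * b.t i⟩⟩

noncomputable instance : Inv (Magnus Q r) :=
  ⟨fun a => ⟨a.g⁻¹, fun i => -(MonoidAlgebra.single a.g⁻¹ (1 : ℤ) * a.t i)⟩⟩

@[simp] theorem mul_g (a b : Magnus Q r) : (a * b).g = a.g * b.g := rfl
@[simp] theorem mul_t (a b : Magnus Q r) (i : Fin r) :
    (a * b).t i = a.t i + MonoidAlgebra.single a.g (1 : ℤ) * b.t i := rfl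
@[simp] theorem one_g : (1 : Magnus Q r).g = 1 := rfl
@[simp] theorem one_t (i : Fin r) : (1 : Magnus Q r).t i = 0 := rfl
@[simp] theorem inv_g (a : Magnus Q r) : a⁻¹.g = a.g⁻¹ := rfl
@[simp] theorem inv_t (a : Magnus Q r) (i : Fin r) :
    a⁻¹.t i = -(MonoidAlgebra.single a.g⁻¹ (1 : ℤ) * a.t i) := rfl

noncomputable instance : Group (Magnus Q r) where
  mul_assoc a b c := ext' (mul_assoc _ _ _) (by
    funext i
    simp [mul_add, add_assoc, ← mul_assoc, MonoidAlgebra.single_mul_single])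
  one_mul a := ext' (one_mul _) (by
    funext i
    simp [← MonoidAlgebra.one_def])
  mul_one a := ext' (mul_one _) (by funext i; simp)
  inv_mul_cancel a := ext' (inv_mul_cancel _) (by funext i; simp)

end Magnus

set_option linter.unusedSectionVars false

section Test
open MonoidAlgebra

variable {r : ℕ} (N : Subgroup (FreeGroup (Fin r))) [N.Normal]

/-- projection to g-component, as a hom -/
def Magnus.gHom (Q : Type*) [Group Q] (r : ℕ) : Magnus Q r →* Q where
  toFun := Magnus.g
  map_one' := rfl
  map_mul' _ _ := rfl

noncomputable def phiF (r : ℕ) : FreeGroup (Fin r) →* Magnus (FreeGroup (Fin r)) r :=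
  FreeGroup.lift (fun i => ⟨FreeGroup.of i, fun j => if j = i then 1 else 0⟩)

noncomputable def phi : FreeGroup (Fin r) →* Magnus (FreeGroup (Fin r) ⧸ N) r :=
  FreeGroup.lift (fun i =>
    (⟨QuotientGroup.mk (FreeGroup.of i), fun j => if j = i then 1 else 0⟩ :
      Magnus (FreeGroup (Fin r) ⧸ N) r))

lemma gphiF (w : FreeGroup (Fin r)) : (phiF r w).g = w := by
  have : (Magnus.gHom (FreeGroup (Fin r)) r).comp (phiF r) = MonoidHom.id _ := by
    apply FreeGroup.ext_hom
    intro i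
    simp [phiF, Magnus.gHom]
  exact DFunLike.congr_fun this w

end Test
section Test2
open MonoidAlgebra

variable {r : ℕ} (N : Subgroup (FreeGroup (Fin r))) [N.Normal]

noncomputable def piN : MonoidAlgebra ℤ (FreeGroup (Fin r)) →+* MonoidAlgebra ℤ (FreeGroup (Fin r) ⧸ N) :=
  MonoidAlgebra.mapDomainRingHom ℤ (QuotientGroup.mk' N)

@[simp] lemma piN_single (f : FreeGroup (Fin r)) (a : ℤ) :
    piN N (MonoidAlgebra.single f a) = MonoidAlgebra.single (QuotientGroup.mk f : FreeGroup (Fin r) ⧸ N) a := by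
  simp [piN, MonoidAlgebra.mapDomainRingHom, Finsupp.mapDomain_single]

noncomputable def MHom : Magnus (FreeGroup (Fin r)) r →* Magnus (FreeGroup (Fin r) ⧸ N) r where
  toFun a := ⟨QuotientGroup.mk a.g, fun i => piN N (a.t i)⟩
  map_one' := Magnus.ext' (by simp) (by funext i; simp)
  map_mul' a b := Magnus.ext' (by simp) (by
    funext i
    simp only [Magnus.mul_t]
    rw [map_add, map_mul, piN_single])

lemma phi_eq : phi N = (MHom N).comp (phiF r) := by
  apply FreeGroup.ext_hom
  intro i
  simp only [phi, MonoidHom.comp_apply, phiF, FreeGroup.lift_apply_of, MHom, MonoidHom.coe_mk, OneHom.coe_mk]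
  refine Magnus.ext' rfl ?_
  funext j
  show _ = piN N (if j = i then 1 else 0)
  split <;> simp_all

end Test2
section Test3
open MonoidAlgebra

variable {r : ℕ}

lemma fox_identity (w : FreeGroup (Fin r)) :
    (MonoidAlgebra.single w 1 : MonoidAlgebra ℤ (FreeGroup (Fin r))) - 1 =
      ∑ i : Fin r, (phiF r w).t i *
        (MonoidAlgebra.single (FreeGroup.of i) 1 - 1) := by
  induction w using FreeGroup.induction_on with
  | C1 =>
    simp [phiF, ← MonoidAlgebra.one_def]
  | of i =>
    show (MonoidAlgebra.single (FreeGroup.of i) 1 : MonoidAlgebra ℤ (FreeGroup (Fin r))) - 1 =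
      ∑ j : Fin r, (phiF r (FreeGroup.of i)).t j * (MonoidAlgebra.single (FreeGroup.of j) 1 - 1)
    rw [phiF, FreeGroup.lift_apply_of]
    rw [Finset.sum_eq_single i]
    · simp
    · intro j _ hj
      simp [if_neg hj]
    · simp
  | inv_of i _ =>
    show (MonoidAlgebra.single (FreeGroup.of i)⁻¹ 1 : MonoidAlgebra ℤ (FreeGroup (Fin r))) - 1 =
      ∑ j : Fin r, (phiF r (FreeGroup.of i)⁻¹).t j * (MonoidAlgebra.single (FreeGroup.of j) 1 - 1)
    have h1 : phiF r (FreeGroup.of i)⁻¹ = (phiF r (FreeGroup.of i))⁻¹ := map_inv _ _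
    rw [h1, phiF, FreeGroup.lift_apply_of]
    rw [Finset.sum_eq_single i]
    · simp only [Magnus.inv_t]
      rw [if_true, mul_one, neg_mul, mul_sub, mul_one, MonoidAlgebra.single_mul_single, one_mul,
        inv_mul_cancel, ← MonoidAlgebra.one_def, neg_sub]
    · intro j _ hj
      simp [if_neg hj]
    · simp
  | mul u v hu hv =>
    rw [map_mul]
    have expand : (MonoidAlgebra.single (u*v) 1 : MonoidAlgebra ℤ (FreeGroup (Fin r))) - 1 =
        MonoidAlgebra.single u 1 * (MonoidAlgebra.single v 1 - 1) + (MonoidAlgebra.single u 1 - 1) := by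
      rw [mul_sub, mul_one, MonoidAlgebra.single_mul_single, mul_one]
      abel
    rw [expand, hu, hv, Finset.mul_sum, ← Finset.sum_add_distrib]
    refine Finset.sum_congr rfl fun i _ => ?_
    rw [Magnus.mul_t, gphiF, add_mul, mul_assoc]
    abel

end Test3
section Test4
open MonoidAlgebra

variable {r : ℕ} (N : Subgroup (FreeGroup (Fin r))) [N.Normal]

local notation "F" => FreeGroup (Fin r)

noncomputable def sct (q : FreeGroup (Fin r) ⧸ N) : FreeGroup (Fin r) := Quotient.out q

@[simp] lemma sct_spec (q : FreeGroup (Fin r) ⧸ N) : (QuotientGroup.mk (sct N q) : FreeGroup (Fin r) ⧸ N) = q :=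
  QuotientGroup.out_eq' q

abbrev AbN := Additive (Abelianization N)

lemma mem_of_mk_eq_one {w : FreeGroup (Fin r)} (h : (QuotientGroup.mk w : FreeGroup (Fin r) ⧸ N) = 1) : w ∈ N :=
  (QuotientGroup.eq_one_iff w).mp h

lemma gmap_mem (w : FreeGroup (Fin r)) : w * (sct N (QuotientGroup.mk w))⁻¹ ∈ N := by
  apply mem_of_mk_eq_one
  simp

noncomputable def gmap (w : FreeGroup (Fin r)) : AbN N :=
  Additive.ofMul (Abelianization.of ⟨w * (sct N (QuotientGroup.mk w))⁻¹, gmap_mem N w⟩)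

lemma lam_mem (u : FreeGroup (Fin r)) (q : FreeGroup (Fin r) ⧸ N) :
    sct N q * u * (sct N (q * QuotientGroup.mk u))⁻¹ ∈ N := by
  apply mem_of_mk_eq_one
  simp only [QuotientGroup.mk_mul, QuotientGroup.mk_inv, sct_spec]
  group

noncomputable def lam (u : FreeGroup (Fin r)) (q : FreeGroup (Fin r) ⧸ N) : AbN N :=
  Additive.ofMul (Abelianization.of ⟨sct N q * u * (sct N (q * QuotientGroup.mk u))⁻¹, lam_mem N u q⟩)

lemma gmap_mul (f u : FreeGroup (Fin r)) :
    gmap N (f * u) = gmap N f + lam N u (QuotientGroup.mk f) := by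
  unfold gmap lam
  rw [← ofMul_mul, ← map_mul]
  congr 1
  congr 1
  · apply Subtype.ext
    show f * u * _ = (f * _) * (_ * u * _)
    rw [QuotientGroup.mk_mul]
    group
  -- membership proof side conditions handled by congr? hopefully none remain

end Test4
section Test5
open MonoidAlgebra

variable {r : ℕ} (N : Subgroup (FreeGroup (Fin r))) [N.Normal]

noncomputable def Theta (z : MonoidAlgebra ℤ (FreeGroup (Fin r))) : AbN N :=
  z.coeff.sum fun f a => a • gmap N f

lemma Theta_zero : Theta N 0 = 0 := Finsupp.sum_zero_index

lemma Theta_add (x y : MonoidAlgebra ℤ (FreeGroup (Fin r))) :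
    Theta N (x + y) = Theta N x + Theta N y :=
  Finsupp.sum_add_index' (fun f => zero_smul ℤ (gmap N f)) (fun f a b => add_smul a b (gmap N f))

lemma Theta_single (f : FreeGroup (Fin r)) (a : ℤ) :
    Theta N (MonoidAlgebra.single f a) = a • gmap N f :=
  Finsupp.sum_single_index (zero_smul ℤ (gmap N f))

lemma Theta_sub (x y : MonoidAlgebra ℤ (FreeGroup (Fin r))) :
    Theta N (x - y) = Theta N x - Theta N y := by
  have := Theta_add N (x - y) y
  rw [sub_add_cancel] at this
  rw [this]; abel

noncomputable def lamhat (u : FreeGroup (Fin r)) (z : MonoidAlgebra ℤ (FreeGroup (Fin r) ⧸ N)) : AbN N :=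
  z.coeff.sum fun q a => a • lam N u q

lemma lamhat_zero (u : FreeGroup (Fin r)) : lamhat N u 0 = 0 := Finsupp.sum_zero_index

lemma lamhat_add (u : FreeGroup (Fin r)) (x y : MonoidAlgebra ℤ (FreeGroup (Fin r) ⧸ N)) :
    lamhat N u (x + y) = lamhat N u x + lamhat N u y :=
  Finsupp.sum_add_index' (fun q => zero_smul ℤ (lam N u q)) (fun q a b => add_smul a b (lam N u q))

lemma lamhat_single (u : FreeGroup (Fin r)) (q : FreeGroup (Fin r) ⧸ N) (a : ℤ) :
    lamhat N u (MonoidAlgebra.single q a) = a • lam N u q :=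
  Finsupp.sum_single_index (zero_smul ℤ (lam N u q))

lemma Theta_smul (a : ℤ) (z : MonoidAlgebra ℤ (FreeGroup (Fin r))) :
    Theta N (a • z) = a • Theta N z := by
  unfold Theta
  rw [MonoidAlgebra.coeff_smul, Finsupp.sum_smul_index' (fun f => zero_smul ℤ (gmap N f)), Finsupp.smul_sum]
  exact Finsupp.sum_congr fun f _ => mul_smul a _ _

lemma lamhat_smul (u : FreeGroup (Fin r)) (a : ℤ) (z : MonoidAlgebra ℤ (FreeGroup (Fin r) ⧸ N)) :
    lamhat N u (a • z) = a • lamhat N u z := by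
  unfold lamhat
  rw [MonoidAlgebra.coeff_smul, Finsupp.sum_smul_index' (fun q => zero_smul ℤ (lam N u q)), Finsupp.smul_sum]
  exact Finsupp.sum_congr fun q _ => mul_smul a _ _

lemma Theta_mul_single (u : FreeGroup (Fin r)) (z : MonoidAlgebra ℤ (FreeGroup (Fin r))) :
    Theta N (z * MonoidAlgebra.single u 1) = Theta N z + lamhat N u (piN N z) := by
  induction z using MonoidAlgebra.induction_on with
  | of f =>
    have hof : (MonoidAlgebra.of ℤ (FreeGroup (Fin r))) f = MonoidAlgebra.single f (1:ℤ) := rfl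
    rw [hof, MonoidAlgebra.single_mul_single, one_mul, Theta_single, Theta_single, piN_single,
      lamhat_single, gmap_mul, smul_add]
  | add x y hx hy =>
    rw [add_mul, Theta_add, hx, hy, Theta_add, map_add, lamhat_add]
    abel
  | smul a z hz =>
    rw [smul_mul_assoc, Theta_smul, hz, Theta_smul, smul_add]
    congr 1
    rw [← lamhat_smul]
    congr 1
    rw [zsmul_eq_mul, zsmul_eq_mul, map_mul, map_intCast]

end Test5
section Test6
open MonoidAlgebra

variable {r : ℕ} (N : Subgroup (FreeGroup (Fin r))) [N.Normal]

lemma commutator_mem_of (x : FreeGroup (Fin r)) (hx : x ∈ N)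
    (h : (⟨x, hx⟩ : N) ∈ commutator N) : x ∈ ⁅N, N⁆ := by
  have hmap : (Subgroup.map N.subtype (commutator N)) = ⁅N, N⁆ := by
    rw [commutator_def, Subgroup.map_commutator]
    congr 1 <;>
    · rw [← MonoidHom.range_eq_map, N.range_subtype]
  rw [← hmap]
  exact ⟨⟨x, hx⟩, h, rfl⟩

lemma ker_le_comm (w : FreeGroup (Fin r)) (h : phi N w = 1) : w ∈ ⁅N, N⁆ := by
  have hM : (MHom N) (phiF r w) = 1 := by rw [← MonoidHom.comp_apply, ← phi_eq]; exact h
  have hg : (QuotientGroup.mk w : FreeGroup (Fin r) ⧸ N) = 1 := by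
    have := congrArg Magnus.g hM
    simpa [MHom, gphiF] using this
  have ht : ∀ i : Fin r, piN N ((phiF r w).t i) = 0 := by
    intro i
    have := congrArg (fun m => Magnus.t m i) hM
    simpa [MHom] using this
  have key : Theta N (MonoidAlgebra.single w 1) - Theta N 1 = 0 := by
    rw [← Theta_sub, fox_identity w]
    have hterm : ∀ i : Fin r, Theta N ((phiF r w).t i *
        (MonoidAlgebra.single (FreeGroup.of i) 1 - 1)) = 0 := by
      intro i
      rw [mul_sub, mul_one, Theta_sub, Theta_mul_single, ht i, lamhat_zero]
      abel
    calc Theta N (∑ i : Fin r, (phiF r w).t i * (MonoidAlgebra.single (FreeGroup.of i) 1 - 1))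
        = ∑ i : Fin r, Theta N ((phiF r w).t i * (MonoidAlgebra.single (FreeGroup.of i) 1 - 1)) :=
          map_sum (AddMonoidHom.mk' (Theta N) (Theta_add N))
            (fun i => (phiF r w).t i * (MonoidAlgebra.single (FreeGroup.of i) 1 - 1)) Finset.univ
      _ = 0 := by simp [hterm]
  have hgm : gmap N w = gmap N 1 := by
    rw [MonoidAlgebra.one_def, Theta_single, Theta_single, one_smul, one_smul,
      sub_eq_zero] at key
    exact key
  have hlam : lam N w 1 = 0 := by
    have h2 := gmap_mul N 1 w
    rw [one_mul, hgm, QuotientGroup.mk_one] at h2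
    exact (left_eq_add.mp h2)
  have hone : ((1 : FreeGroup (Fin r) ⧸ N) * QuotientGroup.mk w) = 1 := by rw [hg, mul_one]
  have hcm : (⟨sct N 1 * w * (sct N (1 * QuotientGroup.mk w))⁻¹, lam_mem N w 1⟩ : N)
      ∈ commutator N := by
    have h3 : Abelianization.of
        (⟨sct N 1 * w * (sct N (1 * QuotientGroup.mk w))⁻¹, lam_mem N w 1⟩ : N) = 1 := hlam
    exact (QuotientGroup.eq_one_iff _).mp h3
  have hin : sct N 1 * w * (sct N (1 * QuotientGroup.mk w))⁻¹ ∈ ⁅N, N⁆ :=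
    commutator_mem_of N _ _ hcm
  rw [hone] at hin
  have hconj := Subgroup.Normal.conj_mem (by infer_instance) _ hin (sct N 1)⁻¹
  have : (sct N 1)⁻¹ * (sct N 1 * w * (sct N 1)⁻¹) * ((sct N 1)⁻¹)⁻¹ = w := by group
  rwa [this] at hconj

end Test6
section Test7
open MonoidAlgebra

variable {r : ℕ} (N : Subgroup (FreeGroup (Fin r))) [N.Normal]

lemma g_phi (w : FreeGroup (Fin r)) : (phi N w).g = QuotientGroup.mk w := by
  rw [phi_eq]
  show (QuotientGroup.mk ((phiF r w).g) : FreeGroup (Fin r) ⧸ N) = QuotientGroup.mk w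
  rw [gphiF]

lemma magnus_commute {Q : Type*} [Group Q] {r : ℕ} (a b : Magnus Q r)
    (ha : a.g = 1) (hb : b.g = 1) : a * b = b * a := by
  refine Magnus.ext' (by rw [Magnus.mul_g, Magnus.mul_g, ha, hb]) ?_
  funext i
  rw [Magnus.mul_t, Magnus.mul_t, ha, hb, ← MonoidAlgebra.one_def, one_mul, one_mul, add_comm]

lemma comm_le_ker : (⁅N, N⁆ : Subgroup (FreeGroup (Fin r))) ≤ MonoidHom.ker (phi N) := by
  rw [Subgroup.commutator_le]
  intro a ha b hb
  rw [MonoidHom.mem_ker, map_commutatorElement]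
  rw [commutatorElement_eq_one_iff_commute]
  exact magnus_commute _ _ (by rw [g_phi]; exact (QuotientGroup.eq_one_iff a).mpr ha)
    (by rw [g_phi]; exact (QuotientGroup.eq_one_iff b).mpr hb)

lemma ker_eq_comm : MonoidHom.ker (phi N) = (⁅N, N⁆ : Subgroup (FreeGroup (Fin r))) :=
  le_antisymm (fun w hw => ker_le_comm N w hw) (comm_le_ker N)

end Test7


/-- The Magnus embedding: for a normal subgroup `N` of the free group `F = F(x_1,…,x_r)`,
the homomorphism `φ : F → M(F/N)` sending `x_i` to `[[x_i^γ, t_i],[0,1]]` has kernel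
exactly `[N,N]`; hence it induces an embedding `F/[N,N] ↪ M(F/N)`. -/
theorem stmt5 {r : ℕ} (N : Subgroup (FreeGroup (Fin r))) [N.Normal] :
    MonoidHom.ker
        (FreeGroup.lift (fun i =>
          (⟨QuotientGroup.mk (FreeGroup.of i),
            fun j => if j = i then 1 else 0⟩ :
              Magnus (FreeGroup (Fin r) ⧸ N) r))) = ⁅N, N⁆ ∧
      ∃ ψ : (FreeGroup (Fin r) ⧸ (⁅N, N⁆ : Subgroup (FreeGroup (Fin r)))) →*
          Magnus (FreeGroup (Fin r) ⧸ N) r,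
        Function.Injective ψ ∧
          ∀ u : FreeGroup (Fin r),
            ψ (QuotientGroup.mk u) =
              FreeGroup.lift (fun i =>
                (⟨QuotientGroup.mk (FreeGroup.of i),
                  fun j => if j = i then 1 else 0⟩ :
                    Magnus (FreeGroup (Fin r) ⧸ N) r)) u := by
  have hker : MonoidHom.ker (phi N) = (⁅N, N⁆ : Subgroup (FreeGroup (Fin r))) := ker_eq_comm N
  refine ⟨hker, ?_⟩
  refine ⟨QuotientGroup.lift ⁅N, N⁆ (phi N)
    (fun x hx => (hker ▸ hx : x ∈ MonoidHom.ker (phi N))), ?_, ?_⟩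
  · intro x y hxy
    induction x using QuotientGroup.induction_on with | H u =>
    induction y using QuotientGroup.induction_on with | H v =>
    rw [QuotientGroup.lift_mk', QuotientGroup.lift_mk'] at hxy
    rw [QuotientGroup.eq]
    apply ker_le_comm
    rw [map_mul, map_inv, hxy, inv_mul_cancel]
  · intro u
    exact QuotientGroup.lift_mk' _ _ u
end

section
/- Let w be a reduced word of length k, Γ(w) the path graph of w (vertices the k+1 prefixes of w, edges labeled by the letters of w), and Ω_w the set of folded rooted homomorphic images of Γ(w). For Γ ∈ Ω_w define ι(Γ) ∈ Ω_w whose vertices are the flows π_{w_i} on Γ defined by prefixes w_i of w, with an edge π_{w_{j-1}} → π_{w_j} labeled by the j-th letter of w. Then there is a rooted X-digraph epimorphism ι(Γ) → Γ mapping each flow π_{w_i} to the endpoint of the path traced by w_i in Γ, and the composition Γ(w) → ι(Γ) → Γ equals the canonical epimorphism Γ(w) → Γ. -/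
open scoped Classical

/-- The support graph of the word `w` presented by the vertex-naming function
`ν : ℕ → ℕ` (the image of the path graph `Γ(w)` under `i ↦ ν i`): the root is `ν 0`
and the positive edges are those traversed by `w`, the `j`-th letter `(x, true)` giving
the edge `ν j →^x ν (j+1)` and `(x, false)` giving `ν (j+1) →^x ν j`.
Taking `ν` injective gives the path graph `Γ(w)` itself. -/
def GraphOf {X : Type*} (w : List (X × Bool)) (ν : ℕ → ℕ) : LGraph X ℕ where
  root := ν 0
  edge a x b := ∃ j < w.length,
    (w[j]? = some (x, true) ∧ ν j = a ∧ ν (j + 1) = b) ∨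
    (w[j]? = some (x, false) ∧ ν j = b ∧ ν (j + 1) = a)

/-- The flow defined by the length-`i` prefix of `w` on the support graph `GraphOf w ν`,
as a function assigning to each positive edge `(a, x, b)` the algebraic number of its
traversals. -/
noncomputable def pflow {X : Type*} (w : List (X × Bool)) (ν : ℕ → ℕ) (i : ℕ) :
    ℕ × X × ℕ → ℤ :=
  fun e => ∑ j ∈ Finset.range i,
    ((if w[j]? = some (e.2.1, true) ∧ ν j = e.1 ∧ ν (j + 1) = e.2.2 then 1 else 0) +
     (if w[j]? = some (e.2.1, false) ∧ ν j = e.2.2 ∧ ν (j + 1) = e.1 then -1 else 0))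

/-- The graph `ι(Γ)` of the support graph `Γ = GraphOf w ν`: its vertices are the flows
on `Γ` defined by the prefixes of `w`, with an edge between the flows of consecutive
prefixes labeled by the corresponding letter of `w`. -/
noncomputable def IotaGraph {X : Type*} (w : List (X × Bool)) (ν : ℕ → ℕ) :
    LGraph X ((ℕ × X × ℕ) → ℤ) where
  root := pflow w ν 0
  edge a x b := ∃ j < w.length,
    (w[j]? = some (x, true) ∧ a = pflow w ν j ∧ b = pflow w ν (j + 1)) ∨
    (w[j]? = some (x, false) ∧ a = pflow w ν (j + 1) ∧ b = pflow w ν j)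

/-- A rooted `X`-digraph morphism. -/
def IsMor {X V U : Type*} (G : LGraph X V) (D : LGraph X U) (φ : V → U) : Prop :=
  φ G.root = D.root ∧ ∀ a x b, G.edge a x b → D.edge (φ a) x (φ b)

/-- A rooted `X`-digraph epimorphism: a morphism that is surjective on the edges (hence
on the vertices of the connected graphs considered here). -/
def IsEpiOn {X V U : Type*} (G : LGraph X V) (D : LGraph X U) (φ : V → U) : Prop :=
  IsMor G D φ ∧ ∀ a x b, D.edge a x b → ∃ a' b', G.edge a' x b' ∧ φ a' = a ∧ φ b' = b

noncomputable def tEdge {X : Type*} (w : List (X × Bool)) (ν : ℕ → ℕ) (x₀ : X) (j : ℕ) :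
    ℕ × X × ℕ :=
  match w[j]? with
  | some (x, true) => (ν j, x, ν (j + 1))
  | some (x, false) => (ν (j + 1), x, ν j)
  | none => (0, x₀, 0)

noncomputable def sgn {X : Type*} (w : List (X × Bool)) (j : ℕ) : ℤ :=
  match w[j]? with
  | some (_, true) => 1
  | some (_, false) => -1
  | none => 0

lemma pflow_eq {X : Type*} (w : List (X × Bool)) (ν : ℕ → ℕ) (x₀ : X) (i : ℕ)
    (e : ℕ × X × ℕ) :
    pflow w ν i e = ∑ j ∈ Finset.range i,
      (if e = tEdge w ν x₀ j then sgn w j else 0) := by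
  unfold pflow
  refine Finset.sum_congr rfl fun j _ => ?_
  obtain ⟨a, x', b⟩ := e
  rcases h : w[j]? with _ | ⟨x, b'⟩
  · simp [tEdge, sgn, h]
  · cases b' <;>
      simp only [tEdge, sgn, h, Option.some.injEq, Prod.mk.injEq,
        Prod.ext_iff] <;>
      by_cases hx : x = x' <;> by_cases h1 : ν j = a <;> by_cases h2 : ν (j+1) = b <;>
      by_cases h3 : ν j = b <;> by_cases h4 : ν (j+1) = a <;>
      simp_all [eq_comm] <;> omega

lemma sumF {X : Type*} (w : List (X × Bool)) (ν : ℕ → ℕ) (x₀ : X) (g : ℕ → ℤ)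
    (i : ℕ) (hi : i ≤ w.length) :
    ∑ e ∈ (Finset.range w.length).image (tEdge w ν x₀),
      pflow w ν i e * (g e.2.2 - g e.1) = g (ν i) - g (ν 0) := by
  have : ∀ e ∈ (Finset.range w.length).image (tEdge w ν x₀),
      pflow w ν i e * (g e.2.2 - g e.1)
        = ∑ j ∈ Finset.range i,
            (if e = tEdge w ν x₀ j then sgn w j * (g e.2.2 - g e.1) else 0) := by
    intro e _
    rw [pflow_eq w ν x₀, Finset.sum_mul]
    exact Finset.sum_congr rfl fun j _ => by split <;> simp
  rw [Finset.sum_congr rfl this, Finset.sum_comm]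
  have step : ∀ j ∈ Finset.range i,
      (∑ e ∈ (Finset.range w.length).image (tEdge w ν x₀),
        if e = tEdge w ν x₀ j then sgn w j * (g e.2.2 - g e.1) else 0)
      = g (ν (j + 1)) - g (ν j) := by
    intro j hj
    rw [Finset.sum_ite_eq' ((Finset.range w.length).image (tEdge w ν x₀)) (tEdge w ν x₀ j)]
    have hmem : tEdge w ν x₀ j ∈ (Finset.range w.length).image (tEdge w ν x₀) :=
      Finset.mem_image_of_mem _ (Finset.mem_range.mpr (lt_of_lt_of_le (Finset.mem_range.mp hj) hi))
    rw [if_pos hmem]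
    have hj' : j < w.length := lt_of_lt_of_le (Finset.mem_range.mp hj) hi
    rcases h : w[j]? with _ | ⟨x, b'⟩
    · rw [List.getElem?_eq_getElem hj'] at h; exact absurd h (by simp)
    · cases b' <;> simp [tEdge, sgn, h] <;> ring
  rw [Finset.sum_congr rfl step, Finset.sum_range_sub (fun k => g (ν k)) i]

lemma key {X : Type*} (w : List (X × Bool)) (ν : ℕ → ℕ) (i j : ℕ)
    (hi : i ≤ w.length) (hj : j ≤ w.length) (h : pflow w ν i = pflow w ν j) :
    ν i = ν j := by
  rcases w with _ | ⟨⟨x₀, b₀⟩, w'⟩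
  · simp only [List.length_nil, Nat.le_zero] at hi hj; rw [hi, hj]
  · set w := (x₀, b₀) :: w' with hw
    set g : ℕ → ℤ := fun n => if n = ν i then 1 else 0 with hg
    have h1 := sumF w ν x₀ g i hi
    have h2 := sumF w ν x₀ g j hj
    rw [h] at h1
    rw [h1] at h2
    have : g (ν i) = g (ν j) := by omega
    simp only [hg, if_pos rfl] at this
    by_contra hne
    rw [if_neg (Ne.symm hne)] at this
    exact one_ne_zero this

/-- For any support graph `Γ = GraphOf w ν` of a reduced word `w` (a folded rooted inverse
homomorphic image of the path graph `Γ(w)`), there is a rooted `X`-digraph epimorphism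
`φ : ι(Γ) → Γ` sending the flow `π_{w_i}` of each prefix to the endpoint `ν i` of the
path traced by that prefix in `Γ`; thus the composition `Γ(w) → ι(Γ) → Γ` equals the
canonical epimorphism `Γ(w) → Γ`, `i ↦ ν i`. -/
theorem stmt10 {X : Type*} (w : List (X × Bool)) (hred : Reduced w) (ν : ℕ → ℕ)
    (hf : (GraphOf w ν).Folded) (hc : (GraphOf w ν).CoFolded) :
    ∃ φ : ((ℕ × X × ℕ) → ℤ) → ℕ,
      IsEpiOn (IotaGraph w ν) (GraphOf w ν) φ ∧
      ∀ i ≤ w.length, φ (pflow w ν i) = ν i := by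
  classical
  set φ : ((ℕ × X × ℕ) → ℤ) → ℕ := fun f =>
    if h : ∃ i ≤ w.length, f = pflow w ν i then ν h.choose else 0 with hφdef
  have hφ : ∀ i ≤ w.length, φ (pflow w ν i) = ν i := by
    intro i hi
    have hex : ∃ k ≤ w.length, pflow w ν i = pflow w ν k := ⟨i, hi, rfl⟩
    simp only [hφdef, dif_pos hex]
    exact (key w ν i hex.choose hi hex.choose_spec.1 hex.choose_spec.2).symm
  refine ⟨φ, ⟨⟨hφ 0 (Nat.zero_le _), ?_⟩, ?_⟩, hφ⟩
  · rintro a x b ⟨j, hj, ⟨h1, rfl, rfl⟩ | ⟨h1, rfl, rfl⟩⟩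
    · rw [hφ j hj.le, hφ (j + 1) hj]
      exact ⟨j, hj, Or.inl ⟨h1, rfl, rfl⟩⟩
    · rw [hφ j hj.le, hφ (j + 1) hj]
      exact ⟨j, hj, Or.inr ⟨h1, rfl, rfl⟩⟩
  · rintro a x b ⟨j, hj, ⟨h1, rfl, rfl⟩ | ⟨h1, rfl, rfl⟩⟩
    · exact ⟨_, _, ⟨j, hj, Or.inl ⟨h1, rfl, rfl⟩⟩, hφ j hj.le, hφ (j + 1) hj⟩
    · exact ⟨_, _, ⟨j, hj, Or.inr ⟨h1, rfl, rfl⟩⟩, hφ (j + 1) hj, hφ j hj.le⟩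
end

section
/- Let Γ, Δ ∈ Ω_w be support graphs of a word w and φ: Γ → Δ a rooted X-digraph epimorphism. Then there exists a rooted X-digraph epimorphism ψ: ι(Γ) → ι(Δ) sending the flow π_{w_i}^{(Γ)} to π_{w_i}^{(Δ)}, and the square with the canonical maps τ_1: ι(Γ) → Γ, τ_2: ι(Δ) → Δ commutes: φ ∘ τ_1 = τ_2 ∘ ψ. -/
open scoped Classical

namespace Stmt12Aux

variable {X : Type*}

noncomputable def edgeFin (w : List (X × Bool)) (ν : ℕ → ℕ) : Finset (ℕ × X × ℕ) :=
  (w.zipIdx.map (fun p => if p.1.2 then (ν p.2, p.1.1, ν (p.2 + 1))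
    else (ν (p.2 + 1), p.1.1, ν p.2))).toFinset

lemma mem_edgeFin_true {w : List (X × Bool)} {ν : ℕ → ℕ} {j : ℕ} {x : X}
    (h : w[j]? = some (x, true)) : (ν j, x, ν (j + 1)) ∈ edgeFin w ν := by
  simp only [edgeFin, List.mem_toFinset, List.mem_map]
  refine ⟨((x, true), j), List.mk_mem_zipIdx_iff_getElem?.mpr ?_, by simp⟩
  exact h

lemma mem_edgeFin_false {w : List (X × Bool)} {ν : ℕ → ℕ} {j : ℕ} {x : X}
    (h : w[j]? = some (x, false)) : (ν (j + 1), x, ν j) ∈ edgeFin w ν := by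
  simp only [edgeFin, List.mem_toFinset, List.mem_map]
  refine ⟨((x, false), j), List.mk_mem_zipIdx_iff_getElem?.mpr ?_, by simp⟩
  exact h

noncomputable def stepW (w : List (X × Bool)) (ν : ℕ → ℕ) (k : ℕ × X × ℕ → ℤ) (j : ℕ) : ℤ :=
  match w[j]? with
  | some (x, true) => k (ν j, x, ν (j + 1))
  | some (x, false) => -k (ν (j + 1), x, ν j)
  | none => 0

lemma sum_pflow_mul (w : List (X × Bool)) (ν : ℕ → ℕ) (k : ℕ × X × ℕ → ℤ)
    {i : ℕ} (hi : i ≤ w.length) :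
    ∑ e ∈ edgeFin w ν, pflow w ν i e * k e = ∑ j ∈ Finset.range i, stepW w ν k j := by
  unfold pflow
  simp only [Finset.sum_mul]
  rw [Finset.sum_comm]
  refine Finset.sum_congr rfl ?_
  intro j hj
  have hjl : j < w.length := lt_of_lt_of_le (Finset.mem_range.mp hj) hi
  obtain ⟨⟨x, s⟩, hp⟩ : ∃ p, w[j]? = some p := ⟨_, List.getElem?_eq_getElem hjl⟩
  have hp' : w[j]? = some (x, s) := hp
  cases s
  · have h1 : ∀ e ∈ edgeFin w ν,
        ((if w[j]? = some (e.2.1, true) ∧ ν j = e.1 ∧ ν (j+1) = e.2.2 then (1:ℤ) else 0) +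
         (if w[j]? = some (e.2.1, false) ∧ ν j = e.2.2 ∧ ν (j+1) = e.1 then -1 else 0)) * k e
        = if e = (ν (j+1), x, ν j) then -k (ν (j+1), x, ν j) else 0 := by
      intro e _
      obtain ⟨a, y, b⟩ := e
      by_cases he : ((a, y, b) : ℕ × X × ℕ) = (ν (j+1), x, ν j)
      · simp only [Prod.mk.injEq] at he
        obtain ⟨h1, h2, h3⟩ := he
        subst h1; subst h2; subst h3
        simp [hp, hp']
      · rw [if_neg he, if_neg, if_neg, zero_add, zero_mul]
        · rintro ⟨hq, h2, h3⟩
          rw [hp] at hq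
          simp only [Option.some.injEq, Prod.mk.injEq] at hq
          exact he (by simp [hq.1, h2, h3])
        · rintro ⟨hq, -, -⟩
          rw [hp] at hq
          simp at hq
    rw [Finset.sum_congr rfl h1, Finset.sum_ite_eq' _ _ (fun _ => -k (ν (j+1), x, ν j)),
      if_pos (mem_edgeFin_false hp)]
    simp [stepW, hp, hp']
  · have h1 : ∀ e ∈ edgeFin w ν,
        ((if w[j]? = some (e.2.1, true) ∧ ν j = e.1 ∧ ν (j+1) = e.2.2 then (1:ℤ) else 0) +
         (if w[j]? = some (e.2.1, false) ∧ ν j = e.2.2 ∧ ν (j+1) = e.1 then -1 else 0)) * k e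
        = if e = (ν j, x, ν (j+1)) then k (ν j, x, ν (j+1)) else 0 := by
      intro e _
      obtain ⟨a, y, b⟩ := e
      by_cases he : ((a, y, b) : ℕ × X × ℕ) = (ν j, x, ν (j+1))
      · simp only [Prod.mk.injEq] at he
        obtain ⟨h1, h2, h3⟩ := he
        subst h1; subst h2; subst h3
        simp [hp, hp']
      · rw [if_neg he, if_neg, if_neg, add_zero, zero_mul]
        · rintro ⟨hq, -, -⟩
          rw [hp] at hq
          simp at hq
        · rintro ⟨hq, h2, h3⟩
          rw [hp] at hq
          simp only [Option.some.injEq, Prod.mk.injEq] at hq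
          exact he (by simp [hq.1, h2, h3])
    rw [Finset.sum_congr rfl h1, Finset.sum_ite_eq' _ _ (fun _ => k (ν j, x, ν (j+1))),
      if_pos (mem_edgeFin_true hp)]
    simp [stepW, hp, hp']



lemma pflow_boundary (w : List (X × Bool)) (ν : ℕ → ℕ) {i : ℕ} (hi : i ≤ w.length) (v : ℕ) :
    ∑ e ∈ edgeFin w ν, pflow w ν i e *
      ((if e.2.2 = v then 1 else 0) - (if e.1 = v then (1:ℤ) else 0))
    = (if ν i = v then 1 else 0) - (if ν 0 = v then (1:ℤ) else 0) := by
  rw [sum_pflow_mul w ν _ hi]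
  have h1 : ∀ j ∈ Finset.range i,
      stepW w ν (fun e => (if e.2.2 = v then 1 else 0) - (if e.1 = v then (1:ℤ) else 0)) j
      = (fun t => if ν t = v then (1:ℤ) else 0) (j+1) - (fun t => if ν t = v then (1:ℤ) else 0) j := by
    intro j hj
    have hjl : j < w.length := lt_of_lt_of_le (Finset.mem_range.mp hj) hi
    obtain ⟨⟨x, s⟩, hp⟩ : ∃ p, w[j]? = some p := ⟨_, List.getElem?_eq_getElem hjl⟩
    have hp' : w[j]? = some (x, s) := hp
    cases s <;> simp [stepW, hp, hp'] <;> ring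
  rw [Finset.sum_congr rfl h1]
  exact Finset.sum_range_sub (fun t => if ν t = v then (1:ℤ) else 0) i

lemma pflow_endpoint {w : List (X × Bool)} {ν : ℕ → ℕ} {i i' : ℕ}
    (hi : i ≤ w.length) (hi' : i' ≤ w.length)
    (h : pflow w ν i = pflow w ν i') : ν i = ν i' := by
  have hb := pflow_boundary w ν hi (ν i')
  rw [h, pflow_boundary w ν hi' (ν i')] at hb
  simp only [if_pos rfl] at hb
  by_contra hne
  rw [if_neg hne, sub_left_inj] at hb
  exact one_ne_zero hb

lemma phi_nu {w : List (X × Bool)} {ν μ : ℕ → ℕ} {φ : ℕ → ℕ}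
    (hfμ : (GraphOf w μ).Folded) (hcμ : (GraphOf w μ).CoFolded)
    (hm : IsMor (GraphOf w ν) (GraphOf w μ) φ) : ∀ i ≤ w.length, φ (ν i) = μ i := by
  intro i
  induction i with
  | zero => exact fun _ => hm.1
  | succ n ih =>
    intro h
    have hn : n < w.length := h
    have ihn := ih (le_of_lt hn)
    obtain ⟨⟨x, s⟩, hp⟩ : ∃ p, w[n]? = some p := ⟨_, List.getElem?_eq_getElem hn⟩
    cases s
    · have eG : (GraphOf w ν).edge (ν (n+1)) x (ν n) := ⟨n, hn, Or.inr ⟨hp, rfl, rfl⟩⟩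
      have eD' := hm.2 _ _ _ eG
      rw [ihn] at eD'
      exact hcμ _ _ _ _ eD' ⟨n, hn, Or.inr ⟨hp, rfl, rfl⟩⟩
    · have eG : (GraphOf w ν).edge (ν n) x (ν (n+1)) := ⟨n, hn, Or.inl ⟨hp, rfl, rfl⟩⟩
      have eD' := hm.2 _ _ _ eG
      rw [ihn] at eD'
      exact hfμ _ _ _ _ eD' ⟨n, hn, Or.inl ⟨hp, rfl, rfl⟩⟩

lemma pflow_push {w : List (X × Bool)} {ν μ : ℕ → ℕ} {φ : ℕ → ℕ}
    (hφν : ∀ i ≤ w.length, φ (ν i) = μ i) {i : ℕ} (hi : i ≤ w.length)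
    (a : ℕ) (x : X) (b : ℕ) :
    pflow w μ i (a, x, b) = ∑ e ∈ edgeFin w ν, pflow w ν i e *
      (if φ e.1 = a ∧ e.2.1 = x ∧ φ e.2.2 = b then 1 else 0) := by
  rw [sum_pflow_mul w ν _ hi]
  unfold pflow
  refine Finset.sum_congr rfl ?_
  intro j hj
  have hjl : j < w.length := lt_of_lt_of_le (Finset.mem_range.mp hj) hi
  have hj1 : j ≤ w.length := le_of_lt hjl
  have hj2 : j + 1 ≤ w.length := hjl
  obtain ⟨⟨y, s⟩, hp⟩ : ∃ p, w[j]? = some p := ⟨_, List.getElem?_eq_getElem hjl⟩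
  have hp' : w[j]? = some (y, s) := hp
  cases s <;>
    by_cases hx : y = x <;> by_cases ha : μ j = a <;> by_cases hb : μ (j+1) = b <;>
      by_cases ha' : μ (j+1) = a <;> by_cases hb' : μ j = b <;>
        simp [stepW, hp, hp', hφν j hj1, hφν (j+1) hj2, hx, ha, hb, ha', hb'] <;>
          by_cases hab : a = b <;> simp [hab, eq_comm]



lemma pflow_eq_push {w : List (X × Bool)} {ν μ : ℕ → ℕ} {φ : ℕ → ℕ}
    (hφν : ∀ i ≤ w.length, φ (ν i) = μ i) {i i' : ℕ}
    (hi : i ≤ w.length) (hi' : i' ≤ w.length)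
    (h : pflow w ν i = pflow w ν i') : pflow w μ i = pflow w μ i' := by
  funext e
  obtain ⟨a, x, b⟩ := e
  rw [pflow_push hφν hi, pflow_push hφν hi', h]

noncomputable def tauMap (w : List (X × Bool)) (ν : ℕ → ℕ) : ((ℕ × X × ℕ) → ℤ) → ℕ :=
  fun f => if h : ∃ i, i ≤ w.length ∧ f = pflow w ν i then ν h.choose else 0

lemma tauMap_spec {w : List (X × Bool)} {ν : ℕ → ℕ} {i : ℕ} (hi : i ≤ w.length) :
    tauMap w ν (pflow w ν i) = ν i := by
  have h : ∃ i', i' ≤ w.length ∧ pflow w ν i = pflow w ν i' := ⟨i, hi, rfl⟩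
  rw [tauMap, dif_pos h]
  exact (pflow_endpoint hi h.choose_spec.1 h.choose_spec.2).symm

noncomputable def psiMap (w : List (X × Bool)) (ν μ : ℕ → ℕ) :
    ((ℕ × X × ℕ) → ℤ) → (ℕ × X × ℕ) → ℤ :=
  fun f => if h : ∃ i, i ≤ w.length ∧ f = pflow w ν i then pflow w μ h.choose else 0

lemma psiMap_spec {w : List (X × Bool)} {ν μ : ℕ → ℕ} {φ : ℕ → ℕ}
    (hφν : ∀ i ≤ w.length, φ (ν i) = μ i) {i : ℕ} (hi : i ≤ w.length) :
    psiMap w ν μ (pflow w ν i) = pflow w μ i := by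
  have h : ∃ i', i' ≤ w.length ∧ pflow w ν i = pflow w ν i' := ⟨i, hi, rfl⟩
  rw [psiMap, dif_pos h]
  exact (pflow_eq_push hφν hi h.choose_spec.1 h.choose_spec.2).symm

end Stmt12Aux

open Stmt12Aux

/-- If `Γ = GraphOf w ν` and `Δ = GraphOf w μ` are support graphs of a word `w` and
`φ : Γ → Δ` is a rooted `X`-digraph epimorphism, then there is a rooted `X`-digraph
epimorphism `ψ : ι(Γ) → ι(Δ)` sending each prefix flow `π_{w_i}^{(Γ)}` to
`π_{w_i}^{(Δ)}`, and the square with the canonical maps `τ₁ : ι(Γ) → Γ`,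
`τ₂ : ι(Δ) → Δ` commutes: `φ ∘ τ₁ = τ₂ ∘ ψ`. -/
theorem stmt12 {X : Type*} (w : List (X × Bool)) (ν μ : ℕ → ℕ)
    (hfν : (GraphOf w ν).Folded) (hcν : (GraphOf w ν).CoFolded)
    (hfμ : (GraphOf w μ).Folded) (hcμ : (GraphOf w μ).CoFolded)
    (φ : ℕ → ℕ) (hφ : IsEpiOn (GraphOf w ν) (GraphOf w μ) φ) :
    ∃ (ψ : ((ℕ × X × ℕ) → ℤ) → (ℕ × X × ℕ) → ℤ)
      (τ₁ : ((ℕ × X × ℕ) → ℤ) → ℕ) (τ₂ : ((ℕ × X × ℕ) → ℤ) → ℕ),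
      IsEpiOn (IotaGraph w ν) (IotaGraph w μ) ψ ∧
      (∀ i ≤ w.length, ψ (pflow w ν i) = pflow w μ i) ∧
      IsEpiOn (IotaGraph w ν) (GraphOf w ν) τ₁ ∧
      (∀ i ≤ w.length, τ₁ (pflow w ν i) = ν i) ∧
      IsEpiOn (IotaGraph w μ) (GraphOf w μ) τ₂ ∧
      (∀ i ≤ w.length, τ₂ (pflow w μ i) = μ i) ∧
      (∀ i ≤ w.length, φ (τ₁ (pflow w ν i)) = τ₂ (ψ (pflow w ν i))) := by
  have hφν : ∀ i ≤ w.length, φ (ν i) = μ i := phi_nu hfμ hcμ hφ.1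
  have hψ : ∀ i ≤ w.length, psiMap w ν μ (pflow w ν i) = pflow w μ i :=
    fun i hi => psiMap_spec hφν hi
  have hτ1 : ∀ i ≤ w.length, tauMap w ν (pflow w ν i) = ν i := fun i hi => tauMap_spec hi
  have hτ2 : ∀ i ≤ w.length, tauMap w μ (pflow w μ i) = μ i := fun i hi => tauMap_spec hi
  refine ⟨psiMap w ν μ, tauMap w ν, tauMap w μ, ⟨⟨hψ 0 (Nat.zero_le _), ?_⟩, ?_⟩, hψ,
    ⟨⟨hτ1 0 (Nat.zero_le _), ?_⟩, ?_⟩, hτ1, ⟨⟨hτ2 0 (Nat.zero_le _), ?_⟩, ?_⟩, hτ2, ?_⟩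
  · rintro a x b ⟨j, hj, (⟨hp, ha, hb⟩ | ⟨hp, ha, hb⟩)⟩
    · exact ⟨j, hj, Or.inl ⟨hp, by rw [ha, hψ j (le_of_lt hj)], by rw [hb, hψ (j+1) hj]⟩⟩
    · exact ⟨j, hj, Or.inr ⟨hp, by rw [ha, hψ (j+1) hj], by rw [hb, hψ j (le_of_lt hj)]⟩⟩
  · rintro a x b ⟨j, hj, (⟨hp, ha, hb⟩ | ⟨hp, ha, hb⟩)⟩
    · exact ⟨pflow w ν j, pflow w ν (j+1), ⟨j, hj, Or.inl ⟨hp, rfl, rfl⟩⟩,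
        (hψ j (le_of_lt hj)).trans ha.symm, (hψ (j+1) hj).trans hb.symm⟩
    · exact ⟨pflow w ν (j+1), pflow w ν j, ⟨j, hj, Or.inr ⟨hp, rfl, rfl⟩⟩,
        (hψ (j+1) hj).trans ha.symm, (hψ j (le_of_lt hj)).trans hb.symm⟩
  · rintro a x b ⟨j, hj, (⟨hp, ha, hb⟩ | ⟨hp, ha, hb⟩)⟩
    · exact ⟨j, hj, Or.inl ⟨hp, by rw [ha, hτ1 j (le_of_lt hj)], by rw [hb, hτ1 (j+1) hj]⟩⟩
    · exact ⟨j, hj, Or.inr ⟨hp, by rw [hb, hτ1 j (le_of_lt hj)], by rw [ha, hτ1 (j+1) hj]⟩⟩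
  · rintro a x b ⟨j, hj, (⟨hp, ha, hb⟩ | ⟨hp, ha, hb⟩)⟩
    · exact ⟨pflow w ν j, pflow w ν (j+1), ⟨j, hj, Or.inl ⟨hp, rfl, rfl⟩⟩,
        (hτ1 j (le_of_lt hj)).trans ha, (hτ1 (j+1) hj).trans hb⟩
    · exact ⟨pflow w ν (j+1), pflow w ν j, ⟨j, hj, Or.inr ⟨hp, rfl, rfl⟩⟩,
        (hτ1 (j+1) hj).trans hb, (hτ1 j (le_of_lt hj)).trans ha⟩
  · rintro a x b ⟨j, hj, (⟨hp, ha, hb⟩ | ⟨hp, ha, hb⟩)⟩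
    · exact ⟨j, hj, Or.inl ⟨hp, by rw [ha, hτ2 j (le_of_lt hj)], by rw [hb, hτ2 (j+1) hj]⟩⟩
    · exact ⟨j, hj, Or.inr ⟨hp, by rw [hb, hτ2 j (le_of_lt hj)], by rw [ha, hτ2 (j+1) hj]⟩⟩
  · rintro a x b ⟨j, hj, (⟨hp, ha, hb⟩ | ⟨hp, ha, hb⟩)⟩
    · exact ⟨pflow w μ j, pflow w μ (j+1), ⟨j, hj, Or.inl ⟨hp, rfl, rfl⟩⟩,
        (hτ2 j (le_of_lt hj)).trans ha, (hτ2 (j+1) hj).trans hb⟩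
    · exact ⟨pflow w μ (j+1), pflow w μ j, ⟨j, hj, Or.inr ⟨hp, rfl, rfl⟩⟩,
        (hτ2 (j+1) hj).trans hb, (hτ2 j (le_of_lt hj)).trans ha⟩
  · intro i hi
    rw [hτ1 i hi, hψ i hi, hτ2 i hi, hφν i hi]
end
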